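/- arXiv:1111.5854 — 2 statements merged into one kernel-verified Lean document; each statement's English description precedes it below -/
import Mathlib

section
/- (No forced surjection from ℕ onto P(ℕ)) Let (ℙ,≤) be a partial order with the hereditary-subsets topology and p ∈ ℙ. Then ⊩_p ¬∃f (f ⊆ (ℕ×P(ℕ))^(p) ∧ 'f is a function' ∧ 'f is onto'). Likewise ⊩_p ¬∃f (f ⊆ P(ℕ)^(p) × P(P(ℕ))^(p) ∧ 'f is a function' ∧ 'f is onto'). -/
set_option linter.unusedVariables false

noncomputable section

/-- Names for the cumulative hierarchy of variable sets over a partial order `P`: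
a name based at `p` assigns to every `q` a family of names (intended to be based at `q`). -/
inductive VName (P : Type) : Type 1
  | mk (base : P) (ι : P → Type) (el : ∀ q : P, ι q → VName P)

namespace VName

variable {P : Type}

/-- The base node of a name. -/
def base : VName P → P
  | mk p _ _ => p

/-- Restriction `f ↾ [r)` of a name to the cone above `r`. -/
def restrictN [Preorder P] : VName P → P → VName P
  | mk _ ι el, r => mk r (fun q => ι q × PLift (r ≤ q)) (fun q x => el q x.1)

/-- Extensional (hereditary) equality of names: this is the equality of the variable
sets (set valued functions on `[p)`) that the names denote. -/
def Equiv : VName P → VName P → Prop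
  | mk p ι el, mk p' ι' el' =>
      p = p' ∧ ∀ q : P, (∀ i : ι q, ∃ j : ι' q, Equiv (el q i) (el' q j)) ∧
        (∀ j : ι' q, ∃ i : ι q, Equiv (el q i) (el' q j))

theorem Equiv.refl : ∀ a : VName P, Equiv a a
  | mk _ ι el => ⟨rfl, fun q => ⟨fun i => ⟨i, Equiv.refl (el q i)⟩,
      fun j => ⟨j, Equiv.refl (el q j)⟩⟩⟩

theorem Equiv.symm : ∀ {a b : VName P}, Equiv a b → Equiv b a
  | mk _ _ el, mk _ _ el', ⟨hp, h⟩ =>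
      ⟨hp.symm, fun q =>
        ⟨fun j => let ⟨i, hi⟩ := (h q).2 j; ⟨i, Equiv.symm hi⟩,
         fun i => let ⟨j, hj⟩ := (h q).1 i; ⟨j, Equiv.symm hj⟩⟩⟩

theorem Equiv.trans : ∀ {a b c : VName P}, Equiv a b → Equiv b c → Equiv a c
  | mk _ _ el, mk _ _ el', mk _ _ el'', ⟨hp, h⟩, ⟨hp', h'⟩ =>
      ⟨hp.trans hp', fun q =>
        ⟨fun i => let ⟨j, hj⟩ := (h q).1 i; let ⟨k, hk⟩ := (h' q).1 j; ⟨k, Equiv.trans hj hk⟩,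
         fun k => let ⟨j, hj⟩ := (h' q).2 k; let ⟨i, hi⟩ := (h q).2 j; ⟨i, Equiv.trans hi hj⟩⟩⟩

instance setoid (P : Type) : Setoid (VName P) :=
  ⟨Equiv, Equiv.refl, Equiv.symm, Equiv.trans⟩

end VName

/-- Variable sets over `P`: names modulo extensional equality. -/
abbrev VSet (P : Type) : Type 1 := Quotient (VName.setoid P)

namespace VSet

variable {P : Type}

/-- The base node. -/
def base : VSet P → P :=
  Quotient.lift VName.base (fun a b h => by cases a; cases b; exact h.1)

/-- The value of a name at a node, as a set of variable sets. -/
def elemsN : VName P → P → Set (VSet P)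
  | .mk _ ι el, q => Set.range fun i : ι q => (⟦el q i⟧ : VSet P)

theorem elemsN_congr : ∀ {a b : VName P}, VName.Equiv a b → elemsN a = elemsN b
  | .mk _ ι el, .mk _ ι' el', ⟨_, h⟩ => by
      funext q
      ext x
      constructor
      · rintro ⟨i, rfl⟩
        obtain ⟨j, hj⟩ := (h q).1 i
        exact ⟨j, (Quotient.sound hj).symm⟩
      · rintro ⟨j, rfl⟩
        obtain ⟨i, hi⟩ := (h q).2 j
        exact ⟨i, Quotient.sound hi⟩

/-- `f.elems q` is the value `f(q)` of the variable set `f` at the node `q`. -/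
def elems : VSet P → P → Set (VSet P) :=
  Quotient.lift elemsN fun _ _ h => elemsN_congr h

theorem restrictN_congr [Preorder P] (r : P) :
    ∀ {a b : VName P}, VName.Equiv a b → VName.Equiv (a.restrictN r) (b.restrictN r)
  | .mk _ _ el, .mk _ _ el', ⟨_, h⟩ =>
      ⟨rfl, fun q =>
        ⟨fun i => let ⟨j, hj⟩ := (h q).1 i.1; ⟨⟨j, i.2⟩, hj⟩,
         fun j => let ⟨i, hi⟩ := (h q).2 j.1; ⟨⟨i, j.2⟩, hi⟩⟩⟩

/-- Restriction `f ↾ [r)`. -/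
def restrict [Preorder P] (f : VSet P) (r : P) : VSet P :=
  Quotient.lift (fun a : VName P => (⟦a.restrictN r⟧ : VSet P))
    (fun _ _ h => Quotient.sound (restrictN_congr r h)) f

end VSet

namespace VName

variable {P : Type}

/-- A name is *good* if it denotes an element of the cumulative hierarchy of variable
sets: its value at each `q` consists of good names based at `q`, it has empty value
outside of the cone of its base, and it is coherent under restrictions
(`g ∈ f(q)` and `q ≤ r` imply `g ↾ [r) ∈ f(r)`). -/
def GoodN [Preorder P] : VName P → Prop
  | .mk p ι el =>
      (∀ q : P, Nonempty (ι q) → p ≤ q) ∧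
      (∀ (q : P) (i : ι q), (el q i).base = q ∧ GoodN (el q i)) ∧
      (∀ (q : P) (i : ι q) (r : P), q ≤ r →
        ∃ j : ι r, VName.Equiv ((el q i).restrictN r) (el r j))

end VName

/-- `Vp p` is the universe `V(p) = ⋃_α V_α(p)` of variable sets at the node `p`. -/
def Vp {P : Type} [Preorder P] (p : P) : Set (VSet P) :=
  {f | ∃ a : VName P, VName.GoodN a ∧ a.base = p ∧ ⟦a⟧ = f}

/-- Membership forced at `p`: `⊩ₚ a ∈ f` iff `a ∈ f(p)`. -/
def memAt {P : Type} [Preorder P] (p : P) (a f : VSet P) : Prop := a ∈ f.elems p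

namespace VSet

variable {P : Type}

/-- Internal unordered pair `{a, b}` based at `q` (name level). -/
def upairN [Preorder P] (q : P) (a b : VName P) : VName P :=
  .mk q (fun r => Bool × PLift (q ≤ r))
    (fun r x => if x.1 then a.restrictN r else b.restrictN r)

/-- Internal (Kuratowski) ordered pair `(a, b)` based at `q` (name level);
its value at `r` is `{{a}↾[r), {a,b}↾[r)}`. -/
def pairN [Preorder P] (q : P) (a b : VName P) : VName P :=
  .mk q (fun r => Bool × PLift (q ≤ r))
    (fun r x => if x.1 then (upairN q a a).restrictN r else (upairN q a b).restrictN r)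

/-- Internal ordered pair `(a, b)` based at `q`. -/
def pairV [Preorder P] (q : P) (a b : VSet P) : VSet P := ⟦pairN q a.out b.out⟧

/-- Internal cartesian product (name level): `(f × g)(r) = {(a,b) : a ∈ f(r), b ∈ g(r)}`. -/
def prodN [Preorder P] (q : P) : VName P → VName P → VName P
  | .mk _ ι el, .mk _ ι' el' =>
      .mk q (fun r => (ι r × ι' r) × PLift (q ≤ r))
        (fun r x => pairN r (el r x.1.1) (el' r x.1.2))

/-- Internal cartesian product `A × B` based at `q`. -/
def prodV [Preorder P] (q : P) (A B : VSet P) : VSet P := ⟦prodN q A.out B.out⟧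

/-- Internal successor (name level): `Suc(f)(q) = {f↾[q)} ∪ f(q)`. -/
def sucN [Preorder P] : VName P → VName P
  | .mk p ι el =>
      .mk p (fun q => ι q ⊕ PLift (p ≤ q))
        (fun q x => Sum.elim (el q) (fun _ => (VName.mk p ι el).restrictN q) x)

/-- Internal successor `Suc(f)`. -/
def sucV [Preorder P] (f : VSet P) : VSet P := ⟦sucN f.out⟧

/-- The name `â(p)` of an external set (given by a `PSet`): `â(p)(q) = {b̂(q) : b ∈ a}`. -/
def hatN [Preorder P] : PSet → P → VName P
  | ⟨_, A⟩, p => .mk p (fun q => _ × PLift (p ≤ q)) (fun q x => hatN (A x.1) q)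

/-- The variable set `â(p)` associated to an external set `a`. -/
def hatV [Preorder P] (a : ZFSet) (p : P) : VSet P := ⟦hatN a.out p⟧

end VSet

/-- The von Neumann natural `n` as a `ZFSet`. -/
def natToZF : ℕ → ZFSet
  | 0 => ∅
  | n + 1 => insert (natToZF n) (natToZF n)


/-- First-order formulas of set theory (with de Bruijn variables `Fin n`), together
with an ordered-pair atom `isPair i j k` ("xᵢ = (xⱼ, xₖ)") and a pair-membership atom
`pairMem i j k` ("(xᵢ, xⱼ) ∈ xₖ"). -/
inductive SetFml : ℕ → Type
  | mem {n} (i j : Fin n) : SetFml n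
  | eq {n} (i j : Fin n) : SetFml n
  | isPair {n} (i j k : Fin n) : SetFml n
  | pairMem {n} (i j k : Fin n) : SetFml n
  | and {n} (f g : SetFml n) : SetFml n
  | or {n} (f g : SetFml n) : SetFml n
  | imp {n} (f g : SetFml n) : SetFml n
  | not {n} (f : SetFml n) : SetFml n
  | ex {n} (f : SetFml (n + 1)) : SetFml n
  | all {n} (f : SetFml (n + 1)) : SetFml n

namespace SetFml

/-- Biconditional. -/
def iff {n} (f g : SetFml n) : SetFml n := .and (.imp f g) (.imp g f)

/-- Relabelling of free variables (weakening/substitution of variables). -/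
def relabel : ∀ {n m : ℕ}, (Fin n → Fin m) → SetFml n → SetFml m
  | _, _, g, .mem i j => .mem (g i) (g j)
  | _, _, g, .eq i j => .eq (g i) (g j)
  | _, _, g, .isPair i j k => .isPair (g i) (g j) (g k)
  | _, _, g, .pairMem i j k => .pairMem (g i) (g j) (g k)
  | _, _, g, .and f₁ f₂ => .and (relabel g f₁) (relabel g f₂)
  | _, _, g, .or f₁ f₂ => .or (relabel g f₁) (relabel g f₂)
  | _, _, g, .imp f₁ f₂ => .imp (relabel g f₁) (relabel g f₂)
  | _, _, g, .not f => .not (relabel g f)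
  | _, _, g, .ex f => .ex (relabel (Fin.cases 0 fun i => (g i).succ) f)
  | _, _, g, .all f => .all (relabel (Fin.cases 0 fun i => (g i).succ) f)

/-- Universal closure of a formula. -/
def closeAll : ∀ {n : ℕ}, SetFml n → SetFml 0
  | 0, f => f
  | _ + 1, f => closeAll (.all f)

/-- Classical realization of a set-theoretic formula in a structure `(M, E)`. -/
def RealizeIn {M : Type*} (E : M → M → Prop) : ∀ {n}, SetFml n → (Fin n → M) → Prop
  | _, .mem i j, v => E (v i) (v j)
  | _, .eq i j, v => v i = v j
  | _, .isPair i j k, v =>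
      ∀ u, E u (v i) ↔ ((∀ t, E t u ↔ t = v j) ∨ (∀ t, E t u ↔ (t = v j ∨ t = v k)))
  | _, .pairMem i j k, v =>
      ∃ w, E w (v k) ∧
        ∀ u, E u w ↔ ((∀ t, E t u ↔ t = v i) ∨ (∀ t, E t u ↔ (t = v i ∨ t = v j)))
  | _, .and f g, v => RealizeIn E f v ∧ RealizeIn E g v
  | _, .or f g, v => RealizeIn E f v ∨ RealizeIn E g v
  | _, .imp f g, v => RealizeIn E f v → RealizeIn E g v
  | _, .not f, v => ¬ RealizeIn E f v
  | _, .ex f, v => ∃ a, RealizeIn E f (Fin.cons a v)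
  | _, .all f, v => ∀ a, RealizeIn E f (Fin.cons a v)

end SetFml

/-- The sheaf forcing relation `⊩ₚ φ[σ₁,…,σₙ]` over the topology of hereditary
(upward closed) subsets of `P`: since `[p)` is the least open neighbourhood of `p`,
`¬`, `→`, `∀` are evaluated over all `q ≥ p`, and `∃` is witnessed in `V(p)`. -/
def Forces {P : Type} [Preorder P] : ∀ {n : ℕ}, P → SetFml n → (Fin n → VSet P) → Prop
  | _, p, .mem i j, s => s i ∈ (s j).elems p
  | _, p, .eq i j, s => s i = s j
  | _, p, .isPair i j k, s => s i = VSet.pairV p (s j) (s k)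
  | _, p, .pairMem i j k, s => VSet.pairV p (s i) (s j) ∈ (s k).elems p
  | _, p, .and f g, s => Forces p f s ∧ Forces p g s
  | _, p, .or f g, s => Forces p f s ∨ Forces p g s
  | _, p, .imp f g, s => ∀ q : P, p ≤ q →
      Forces q f (fun i => (s i).restrict q) → Forces q g (fun i => (s i).restrict q)
  | _, p, .not f, s => ∀ q : P, p ≤ q → ¬ Forces q f (fun i => (s i).restrict q)
  | _, p, .ex f, s => ∃ σ ∈ Vp p, Forces p f (Fin.cons σ s)
  | _, p, .all f, s => ∀ q : P, p ≤ q → ∀ σ ∈ Vp q,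
      Forces q f (Fin.cons σ fun i => (s i).restrict q)


namespace SetFml

/-- `xᵢ ⊆ xⱼ`. -/
def fSub {n} (i j : Fin n) : SetFml n := .all (.imp (.mem 0 i.succ) (.mem 0 j.succ))

/-- "`x_f` is a set of ordered pairs and is single valued" (`f` is a function). -/
def fIsFunction {n} (f : Fin n) : SetFml n :=
  .and (.all (.imp (.mem 0 f.succ) (.ex (.ex (.isPair 2 1 0)))))
    (.all (.all (.all (.imp
      (.and (.pairMem 2 1 f.succ.succ.succ) (.pairMem 2 0 f.succ.succ.succ)) (.eq 1 0)))))

/-- "`x_f` is defined on every element of `x_a`". -/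
def fTotal {n} (f a : Fin n) : SetFml n :=
  .all (.imp (.mem 0 a.succ) (.ex (.pairMem 1 0 f.succ.succ)))

/-- "`x_f` is onto `x_b`". -/
def fOnto {n} (f b : Fin n) : SetFml n :=
  .all (.imp (.mem 0 b.succ) (.ex (.pairMem 0 1 f.succ.succ)))

/-- "`x_f` is injective". -/
def fInjective {n} (f : Fin n) : SetFml n :=
  .all (.all (.all (.imp
    (.and (.pairMem 2 0 f.succ.succ.succ) (.pairMem 1 0 f.succ.succ.succ)) (.eq 2 1))))

/-- "`x_f` is a function from `x_a` to `x_b`". -/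
def fFuncFromTo {n} (f a b : Fin n) : SetFml n :=
  .and (.all (.imp (.mem 0 f.succ) (.ex (.ex (.and (.mem 1 a.succ.succ.succ)
      (.and (.mem 0 b.succ.succ.succ) (.isPair 2 1 0)))))))
    (.and (.all (.all (.all (.imp
        (.and (.pairMem 2 1 f.succ.succ.succ) (.pairMem 2 0 f.succ.succ.succ)) (.eq 1 0)))))
      (fTotal f a))

/-- "`x_f` is an injective function from `x_a` to `x_b`". -/
def fInjFromTo {n} (f a b : Fin n) : SetFml n := .and (fFuncFromTo f a b) (fInjective f)

/-- "`x_f` is a surjective function from `x_a` onto `x_b`". -/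
def fSurjFromTo {n} (f a b : Fin n) : SetFml n := .and (fFuncFromTo f a b) (fOnto f b)

/-- `|x_a| < |x_b|`: there is an injective function from `x_a` to `x_b` and
no surjective function from `x_a` onto `x_b`. -/
def fCardLt {n} (a b : Fin n) : SetFml n :=
  .and (.ex (fInjFromTo 0 a.succ b.succ)) (.not (.ex (fSurjFromTo 0 a.succ b.succ)))

/-- "`x_S` is an inductive set" (contains the empty set, closed under successor). -/
def fInductive {n} (S : Fin n) : SetFml n :=
  .and (.ex (.and (.mem 0 S.succ) (.all (.not (.mem 0 1)))))
    (.all (.imp (.mem 0 S.succ) (.ex (.and (.mem 0 S.succ.succ)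
      (.all (.iff (.mem 0 1) (.or (.mem 0 2) (.eq 0 2))))))))

/-- "`x_N` is the set of natural numbers" (the least inductive set). -/
def fIsNat {n} (N : Fin n) : SetFml n :=
  .and (fInductive N) (.all (.imp (fInductive 0) (fSub N.succ 0)))

/-- "`x_pw` is the power set of `x_x`". -/
def fIsPow {n} (pw x : Fin n) : SetFml n := .all (.iff (.mem 0 pw.succ) (fSub 0 x.succ))

/-- `¬CH`: there is a set `B` with `|ℕ| < |B| < |P(ℕ)|`. -/
def negCHFml : SetFml 0 :=
  .ex (.ex (.ex (.and (fIsNat 2)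
    (.and (fIsPow 1 2) (.and (fCardLt 2 0) (fCardLt 0 1))))))

/-! The axioms of `ZFC` as sentences (the axiom of foundation in its `¬¬` form and
the axiom of choice in the form `∀𝓕(∀x∀y φ → ¬¬ψ*)`). -/

/-- Axiom of existence of the empty set: `∃x∀y ¬(y ∈ x)`. -/
def existsEmptyAx : SetFml 0 := .ex (.all (.not (.mem 0 1)))

/-- Axiom of extensionality: `∀x∀y(∀z(z ∈ x ↔ z ∈ y) → x = y)`. -/
def extAx : SetFml 0 :=
  .all (.all (.imp (.all (.iff (.mem 0 2) (.mem 0 1))) (.eq 1 0)))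

/-- Axiom of pairing: `∀x∀y∃z∀w(w ∈ z ↔ (w = x ∨ w = y))`. -/
def pairAx : SetFml 0 :=
  .all (.all (.ex (.all (.iff (.mem 0 1) (.or (.eq 0 3) (.eq 0 2))))))

/-- Axiom of union: `∀𝓕∃A∀x(x ∈ A ↔ ∃Y(Y ∈ 𝓕 ∧ x ∈ Y))`. -/
def unionAx : SetFml 0 :=
  .all (.ex (.all (.iff (.mem 0 1) (.ex (.and (.mem 0 3) (.mem 1 0))))))

/-- Axiom of power set: `∀x∃y∀z(z ∈ y ↔ ∀w(w ∈ z → w ∈ x))`. -/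
def powAx : SetFml 0 :=
  .all (.ex (.all (.iff (.mem 0 1) (.all (.imp (.mem 0 1) (.mem 0 3))))))

/-- Axiom of infinity: there exists an inductive set. -/
def infAx : SetFml 0 :=
  .ex (.and (.ex (.and (.mem 0 1) (.all (.not (.mem 0 1)))))
    (.all (.imp (.mem 0 1) (.ex (.and (.mem 0 2)
      (.all (.iff (.mem 0 1) (.or (.mem 0 2) (.eq 0 2)))))))))

/-- The matrix `x ∈ y ↔ (x ∈ z ∧ φ(x,z,w₁,…,wₙ))` of the comprehension axiom, in the
context `0 = x, 1 = y, 2 = z, 3+i = wᵢ`. -/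
def compInner {n} (φ : SetFml (n + 2)) : SetFml (n + 3) :=
  .iff (.mem 0 1) (.and (.mem 0 2)
    (φ.relabel (Fin.cases 0 (Fin.cases 2 fun j => j.succ.succ.succ))))

/-- The comprehension axiom for `φ(x,z,w₁,…,wₙ)` (free variables `0 = x, 1 = z,
2+i = wᵢ`): `∀z∀w₁…∀wₙ∃y∀x(x ∈ y ↔ (x ∈ z ∧ φ))`. -/
def compAx {n} (φ : SetFml (n + 2)) : SetFml 0 :=
  closeAll (.ex (.all (compInner φ)))

/-- `∀x(x ∈ A → ∃!y φ(x,y,A,w₁,…,wₙ))`, in the context `0 = A, 1+i = wᵢ`;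
`φ` has free variables `0 = x, 1 = y, 2 = A, 3+i = wᵢ`. -/
def replHyp {n} (φ : SetFml (n + 3)) : SetFml (n + 1) :=
  .all (.imp (.mem 0 1) (.ex (.and
    (φ.relabel (Fin.cases 1 (Fin.cases 0 (Fin.cases 2 fun j => j.succ.succ.succ))))
    (.all (.imp
      (φ.relabel (Fin.cases 2 (Fin.cases 0 (Fin.cases 3 fun j => j.succ.succ.succ.succ))))
      (.eq 0 1))))))

/-- `∃Y∀x(x ∈ A → ∃y(y ∈ Y ∧ φ(x,y,A,w⃗)))`, in the context `0 = A, 1+i = wᵢ`. -/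
def replConcl {n} (φ : SetFml (n + 3)) : SetFml (n + 1) :=
  .ex (.all (.imp (.mem 0 2) (.ex (.and (.mem 0 2)
    (φ.relabel (Fin.cases 1 (Fin.cases 0 (Fin.cases 3 fun j => j.succ.succ.succ.succ))))))))

/-- The replacement axiom for `φ(x,y,A,w₁,…,wₙ)`. -/
def replAx {n} (φ : SetFml (n + 3)) : SetFml 0 :=
  closeAll (.imp (replHyp φ) (replConcl φ))

/-- The axiom of foundation, in the (classically equivalent) `¬¬` form:
`¬∃x ¬(∃y(y ∈ x) → ∃y(y ∈ x ∧ ¬∃z(z ∈ x ∧ z ∈ y)))`. -/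
def foundAx : SetFml 0 :=
  .not (.ex (.not (.imp (.ex (.mem 0 1))
    (.ex (.and (.mem 0 1) (.not (.ex (.and (.mem 0 2) (.mem 0 1)))))))))

/-- `φ := (x ∈ 𝓕 ∧ y ∈ 𝓕 → ((∃z(z ∈ x ∧ z ∈ y) → x = y) ∧ ∃z(z ∈ x)))`,
in the context `0 = y, 1 = x, 2 = 𝓕`. -/
def acPhi : SetFml 3 :=
  .imp (.and (.mem 1 2) (.mem 0 2))
    (.and (.imp (.ex (.and (.mem 0 2) (.mem 0 1))) (.eq 1 0)) (.ex (.mem 0 2)))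

/-- `ψ* := ∃E(x ∈ 𝓕 → ∃a(a ∈ E ∧ a ∈ x ∧ ∀b(b ∈ E ∧ b ∈ x → ¬¬(b = a))))`,
in the context `0 = y, 1 = x, 2 = 𝓕`. -/
def acPsiStar : SetFml 3 :=
  .ex (.imp (.mem 2 3) (.ex (.and (.mem 0 1) (.and (.mem 0 3)
    (.all (.imp (.and (.mem 0 2) (.mem 0 4)) (.not (.not (.eq 0 1)))))))))

/-- The axiom of choice in the form `∀𝓕∀x∀y(φ → ¬¬ψ*)`. -/
def acAx : SetFml 0 := .all (.all (.all (.imp acPhi (.not (.not acPsiStar)))))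

end SetFml


namespace MyAux

open VSet

set_option linter.unusedSectionVars false

variable {P : Type} [Preorder P]

theorem elems_mk (a : VName P) : VSet.elems (⟦a⟧ : VSet P) = VSet.elemsN a := rfl

theorem base_mk (a : VName P) : VSet.base (⟦a⟧ : VSet P) = a.base := rfl

theorem restrict_mk (a : VName P) (r : P) :
    VSet.restrict (⟦a⟧ : VSet P) r = ⟦a.restrictN r⟧ := rfl

theorem restrict_out (A : VSet P) (r : P) : A.restrict r = ⟦A.out.restrictN r⟧ := by
  conv_lhs => rw [← Quotient.out_eq A]
  rfl

theorem equiv_iff (a b : VName P) :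
    VName.Equiv a b ↔ a.base = b.base ∧ VSet.elemsN a = VSet.elemsN b := by
  obtain ⟨p, ι, el⟩ := a
  obtain ⟨p', ι', el'⟩ := b
  constructor
  · rintro ⟨hp, h⟩
    refine ⟨hp, funext fun q => Set.ext fun x => ?_⟩
    constructor
    · rintro ⟨i, rfl⟩
      obtain ⟨j, hj⟩ := (h q).1 i
      exact ⟨j, (Quotient.sound hj).symm⟩
    · rintro ⟨j, rfl⟩
      obtain ⟨i, hi⟩ := (h q).2 j
      exact ⟨i, Quotient.sound hi⟩
  · rintro ⟨hp, h⟩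
    refine ⟨hp, fun q => ⟨fun i => ?_, fun j => ?_⟩⟩
    · have : (⟦el q i⟧ : VSet P) ∈ VSet.elemsN (VName.mk p' ι' el') q := by
        rw [← h]; exact ⟨i, rfl⟩
      obtain ⟨j, hj⟩ := this
      exact ⟨j, Quotient.exact hj.symm⟩
    · have : (⟦el' q j⟧ : VSet P) ∈ VSet.elemsN (VName.mk p ι el) q := by
        rw [h]; exact ⟨j, rfl⟩
      obtain ⟨i, hi⟩ := this
      exact ⟨i, Quotient.exact hi⟩

theorem vset_ext {f g : VSet P} (hb : f.base = g.base) (he : f.elems = g.elems) : f = g := by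
  induction f using Quotient.ind
  induction g using Quotient.ind
  exact Quotient.sound ((equiv_iff _ _).2 ⟨hb, he⟩)

theorem base_restrict (f : VSet P) (r : P) : (f.restrict r).base = r := by
  induction f using Quotient.ind with
  | _ a => obtain ⟨p, ι, el⟩ := a; rfl

theorem elems_restrict (f : VSet P) (r s : P) :
    (f.restrict r).elems s = {x | r ≤ s ∧ x ∈ f.elems s} := by
  induction f using Quotient.ind with
  | _ a =>
    obtain ⟨p, ι, el⟩ := a
    ext x
    constructor
    · rintro ⟨⟨i, ⟨h⟩⟩, rfl⟩
      exact ⟨h, i, rfl⟩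
    · rintro ⟨h, i, rfl⟩
      exact ⟨⟨i, ⟨h⟩⟩, rfl⟩

theorem restrict_restrict (f : VSet P) {r s : P} (h : r ≤ s) :
    (f.restrict r).restrict s = f.restrict s := by
  refine vset_ext (by rw [base_restrict, base_restrict]) (funext fun t => ?_)
  rw [elems_restrict, elems_restrict, elems_restrict]
  ext x
  exact ⟨fun ⟨hst, _, hx⟩ => ⟨hst, hx⟩, fun ⟨hst, hx⟩ => ⟨hst, h.trans hst, hx⟩⟩

theorem base_of_mem_Vp {f : VSet P} {p : P} (h : f ∈ Vp p) : f.base = p := by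
  obtain ⟨a, _, hb, rfl⟩ := h
  exact hb

theorem elems_le_of_mem_Vp {f : VSet P} {p : P} (h : f ∈ Vp p) {s : P} {x : VSet P}
    (hx : x ∈ f.elems s) : p ≤ s := by
  obtain ⟨a, ha, hb, rfl⟩ := h
  obtain ⟨q', ι, el⟩ := a
  obtain ⟨i, -⟩ := hx
  exact hb ▸ ha.1 s ⟨i⟩

theorem restrict_self {f : VSet P} {p : P} (h : f ∈ Vp p) : f.restrict p = f := by
  refine vset_ext (by rw [base_restrict, base_of_mem_Vp h]) (funext fun s => ?_)
  rw [elems_restrict]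
  ext x
  exact ⟨fun h' => h'.2, fun h' => ⟨elems_le_of_mem_Vp h h', h'⟩⟩

end MyAux

namespace MyAux

open VSet

set_option linter.unusedSectionVars false

variable {P : Type} [Preorder P]

theorem base_hat (x : PSet) (p : P) : (VSet.hatN x p : VName P).base = p := by
  obtain ⟨α, A⟩ := x; rfl

theorem elems_hat (x : PSet) (p r : P) :
    VSet.elems (⟦VSet.hatN x p⟧ : VSet P) r
      = {f | p ≤ r ∧ ∃ i : x.Type, f = ⟦VSet.hatN (x.Func i) r⟧} := by
  obtain ⟨α, A⟩ := x
  ext f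
  constructor
  · rintro ⟨⟨i, ⟨h⟩⟩, rfl⟩
    exact ⟨h, i, rfl⟩
  · rintro ⟨h, i, rfl⟩
    exact ⟨⟨i, ⟨h⟩⟩, rfl⟩

theorem hat_restrict {x : PSet} {p r : P} (h : p ≤ r) :
    VSet.restrict (⟦VSet.hatN x p⟧ : VSet P) r = ⟦VSet.hatN x r⟧ := by
  refine vset_ext (by rw [base_restrict, base_mk, base_hat]) (funext fun s => ?_)
  rw [elems_restrict, elems_mk, elems_mk]
  rw [show VSet.elemsN (VSet.hatN x p) = VSet.elems (⟦VSet.hatN x p⟧ : VSet P) from rfl]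
  rw [show VSet.elemsN (VSet.hatN x r) = VSet.elems (⟦VSet.hatN x r⟧ : VSet P) from rfl]
  rw [elems_hat, elems_hat]
  ext f
  exact ⟨fun ⟨hrs, _, hf⟩ => ⟨hrs, hf⟩, fun ⟨hrs, hf⟩ => ⟨hrs, h.trans hrs, hf⟩⟩

theorem hatN_sound {x y : PSet} (h : PSet.Equiv x y) (p : P) :
    (⟦VSet.hatN x p⟧ : VSet P) = ⟦VSet.hatN y p⟧ := by
  induction x generalizing y p with
  | mk α A ih =>
    obtain ⟨β, B⟩ := y
    obtain ⟨hab, hba⟩ := PSet.equiv_iff.1 h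
    refine vset_ext (by rw [base_mk, base_mk, base_hat, base_hat]) (funext fun r => ?_)
    rw [show VSet.elems (⟦VSet.hatN (PSet.mk α A) p⟧ : VSet P)
        = VSet.elems (⟦VSet.hatN (PSet.mk α A) p⟧ : VSet P) from rfl]
    rw [elems_hat, elems_hat]
    ext f
    constructor
    · rintro ⟨hpr, i, rfl⟩
      obtain ⟨j, hj⟩ := hab i
      exact ⟨hpr, j, ih i hj r⟩
    · rintro ⟨hpr, j, rfl⟩
      obtain ⟨i, hi⟩ := hba j
      exact ⟨hpr, i, (ih i hi r).symm⟩

theorem hatN_inj {x y : PSet} {p : P}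
    (h : (⟦VSet.hatN x p⟧ : VSet P) = ⟦VSet.hatN y p⟧) : PSet.Equiv x y := by
  induction x generalizing y p with
  | mk α A ih =>
    obtain ⟨β, B⟩ := y
    have he := congrFun (congrArg VSet.elems h) p
    rw [elems_hat, elems_hat] at he
    refine PSet.equiv_iff.2 ⟨fun i => ?_, fun j => ?_⟩
    · have : (⟦VSet.hatN (PSet.mk α A |>.Func i) p⟧ : VSet P)
          ∈ {f : VSet P | p ≤ p ∧ ∃ j, f = ⟦VSet.hatN (PSet.mk β B |>.Func j) p⟧} := by
        rw [← he]; exact ⟨le_refl p, i, rfl⟩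
      obtain ⟨-, j, hj⟩ := this
      exact ⟨j, ih i hj⟩
    · have : (⟦VSet.hatN (PSet.mk β B |>.Func j) p⟧ : VSet P)
          ∈ {f : VSet P | p ≤ p ∧ ∃ i, f = ⟦VSet.hatN (PSet.mk α A |>.Func i) p⟧} := by
        rw [he]; exact ⟨le_refl p, j, rfl⟩
      obtain ⟨-, i, hi⟩ := this
      exact ⟨i, ih i hi.symm⟩

theorem hatV_restrict (X : ZFSet) {p r : P} (h : p ≤ r) :
    (VSet.hatV X p : VSet P).restrict r = VSet.hatV X r :=
  hat_restrict h

theorem hatV_inj {X Y : ZFSet} {p : P} (h : (VSet.hatV X p : VSet P) = VSet.hatV Y p) :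
    X = Y := by
  exact Quotient.out_equiv_out.mp (hatN_inj (x := X.out) (y := Y.out) (p := p) h)

theorem elems_hatV (X : ZFSet) (p r : P) :
    (VSet.hatV X p : VSet P).elems r = {f | p ≤ r ∧ ∃ b ∈ X, f = VSet.hatV b r} := by
  rw [show (VSet.hatV X p : VSet P).elems r
      = VSet.elems (⟦VSet.hatN X.out p⟧ : VSet P) r from rfl, elems_hat]
  ext f
  constructor
  · rintro ⟨hpr, i, rfl⟩
    refine ⟨hpr, ZFSet.mk (X.out.Func i), ?_, ?_⟩
    · have hm : ZFSet.mk (X.out.Func i) ∈ ZFSet.mk X.out :=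
        ZFSet.mk_mem_iff.2 (PSet.func_mem _ i)
      rwa [ZFSet.mk_out] at hm
    · exact (hatN_sound (Quotient.exact (Quotient.out_eq (ZFSet.mk (X.out.Func i)))) r).symm
  · rintro ⟨hpr, b, hb, rfl⟩
    rw [← ZFSet.mk_out X, ← ZFSet.mk_out b, ZFSet.mk_mem_iff] at hb
    obtain ⟨i, hi⟩ := hb
    exact ⟨hpr, i, hatN_sound hi r⟩

theorem base_equiv {a b : VName P} (h : VName.Equiv a b) : a.base = b.base :=
  ((equiv_iff _ _).1 h).1

theorem goodN_congr : ∀ {a b : VName P}, VName.Equiv a b → a.GoodN → b.GoodN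
  | .mk p ι el, .mk p' ι' el', ⟨hp, h⟩, ⟨h1, h2, h3⟩ =>
    ⟨fun q hne =>
       hne.elim fun j =>
         let ⟨i, _⟩ := (h q).2 j
         hp ▸ h1 q ⟨i⟩,
     fun q j =>
       let ⟨i, hi⟩ := (h q).2 j
       ⟨base_equiv hi ▸ (h2 q i).1, goodN_congr hi (h2 q i).2⟩,
     fun q j r hqr =>
       let ⟨i, hi⟩ := (h q).2 j
       let ⟨i', hi'⟩ := h3 q i r hqr
       let ⟨j', hj'⟩ := (h r).1 i'
       ⟨j', ((VSet.restrictN_congr r hi).symm.trans hi').trans hj'⟩⟩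

theorem goodN_restrictN : ∀ {a : VName P} (r : P), a.GoodN → (a.restrictN r).GoodN
  | .mk p ι el, r, ⟨h1, h2, h3⟩ =>
    ⟨fun q hne => hne.elim fun i => i.2.down,
     fun q i => h2 q i.1,
     fun q i s hqs =>
       let ⟨j, hj⟩ := h3 q i.1 s hqs
       ⟨⟨j, ⟨i.2.down.trans hqs⟩⟩, hj⟩⟩

theorem goodN_hatN (x : PSet) (p : P) : (VSet.hatN x p : VName P).GoodN := by
  induction x generalizing p with
  | mk α A ih =>
    refine ⟨fun q hne => hne.elim fun i => i.2.down,
      fun q i => ⟨base_hat _ _, ih i.1 q⟩,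
      fun q i r hqr => ⟨⟨i.1, ⟨i.2.down.trans hqr⟩⟩, ?_⟩⟩
    exact Quotient.exact (hat_restrict hqr)

theorem hatV_mem_Vp (X : ZFSet) (p : P) : (VSet.hatV X p : VSet P) ∈ Vp p :=
  ⟨VSet.hatN X.out p, goodN_hatN _ _, base_hat _ _, rfl⟩

end MyAux

namespace MyAux

open VSet

set_option linter.unusedSectionVars false

variable {P : Type} [Preorder P]

/-- Unordered pair at the `VSet` level. -/
def uV (q : P) (A B : VSet P) : VSet P := ⟦VSet.upairN q A.out B.out⟧

theorem base_restrictN (a : VName P) (r : P) : (a.restrictN r).base = r := by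
  obtain ⟨p, ι, el⟩ := a; rfl

theorem elems_upair (q r : P) (x y : VName P) :
    VSet.elems (⟦VSet.upairN q x y⟧ : VSet P) r
      = {f | q ≤ r ∧ (f = VSet.restrict ⟦x⟧ r ∨ f = VSet.restrict ⟦y⟧ r)} := by
  ext f
  constructor
  · rintro ⟨⟨bl, ⟨h⟩⟩, rfl⟩
    cases bl
    · exact ⟨h, Or.inr rfl⟩
    · exact ⟨h, Or.inl rfl⟩
  · rintro ⟨h, (rfl | rfl)⟩
    · exact ⟨⟨true, ⟨h⟩⟩, rfl⟩
    · exact ⟨⟨false, ⟨h⟩⟩, rfl⟩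

theorem upair_sound {q : P} {x x' y y' : VName P} (hx : (⟦x⟧ : VSet P) = ⟦x'⟧)
    (hy : (⟦y⟧ : VSet P) = ⟦y'⟧) :
    (⟦VSet.upairN q x y⟧ : VSet P) = ⟦VSet.upairN q x' y'⟧ := by
  refine vset_ext rfl (funext fun r => ?_)
  rw [elems_upair, elems_upair, hx, hy]

theorem mk_upair (q : P) (x y : VName P) :
    (⟦VSet.upairN q x y⟧ : VSet P) = uV q ⟦x⟧ ⟦y⟧ :=
  upair_sound (Quotient.out_eq _).symm (Quotient.out_eq _).symm

theorem elems_uV (q r : P) (A B : VSet P) :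
    (uV q A B : VSet P).elems r = {f | q ≤ r ∧ (f = A.restrict r ∨ f = B.restrict r)} := by
  rw [show (uV q A B : VSet P).elems r
      = VSet.elems (⟦VSet.upairN q A.out B.out⟧ : VSet P) r from rfl, elems_upair]
  rw [show VSet.restrict (⟦A.out⟧ : VSet P) r = A.restrict r by rw [Quotient.out_eq],
    show VSet.restrict (⟦B.out⟧ : VSet P) r = B.restrict r by rw [Quotient.out_eq]]

theorem base_uV (q : P) (A B : VSet P) : (uV q A B : VSet P).base = q := rfl

theorem restrict_uV {q r : P} (h : q ≤ r) (A B : VSet P) :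
    (uV q A B : VSet P).restrict r = uV r (A.restrict r) (B.restrict r) := by
  refine vset_ext (by rw [base_restrict, base_uV]) (funext fun s => ?_)
  rw [elems_restrict, elems_uV, elems_uV]
  ext f
  constructor
  · rintro ⟨hrs, _, hf⟩
    exact ⟨hrs, by rwa [restrict_restrict A hrs, restrict_restrict B hrs]⟩
  · rintro ⟨hrs, hf⟩
    exact ⟨hrs, h.trans hrs, by rwa [restrict_restrict A hrs, restrict_restrict B hrs] at hf⟩

theorem elems_pairV (q r : P) (A B : VSet P) :
    (VSet.pairV q A B : VSet P).elems r
      = {f | q ≤ r ∧ (f = (uV q A A : VSet P).restrict r ∨ f = (uV q A B : VSet P).restrict r)} := by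
  have h1 : (⟦VSet.upairN q A.out A.out⟧ : VSet P) = uV q A A := by
    rw [mk_upair, Quotient.out_eq]
  have h2 : (⟦VSet.upairN q A.out B.out⟧ : VSet P) = uV q A B := by
    rw [mk_upair, Quotient.out_eq, Quotient.out_eq]
  ext f
  constructor
  · rintro ⟨⟨bl, ⟨h⟩⟩, rfl⟩
    cases bl
    · exact ⟨h, Or.inr (by rw [← h2]; rfl)⟩
    · exact ⟨h, Or.inl (by rw [← h1]; rfl)⟩
  · rintro ⟨h, (hf | hf)⟩
    · exact ⟨⟨true, ⟨h⟩⟩, by rw [hf, ← h1]; rfl⟩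
    · exact ⟨⟨false, ⟨h⟩⟩, by rw [hf, ← h2]; rfl⟩

theorem base_pairV (q : P) (A B : VSet P) : (VSet.pairV q A B : VSet P).base = q := rfl

theorem restrict_pairV {q r : P} (h : q ≤ r) (A B : VSet P) :
    (VSet.pairV q A B : VSet P).restrict r = VSet.pairV r (A.restrict r) (B.restrict r) := by
  refine vset_ext (by rw [base_restrict, base_pairV]) (funext fun s => ?_)
  rw [elems_restrict, elems_pairV, elems_pairV]
  have key : ∀ (X Y : VSet P), r ≤ s →
      (uV r (X.restrict r) (Y.restrict r) : VSet P).restrict s = (uV q X Y : VSet P).restrict s := by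
    intro X Y hrs
    rw [restrict_uV hrs, restrict_restrict X hrs, restrict_restrict Y hrs,
      restrict_uV (h.trans hrs)]
  ext f
  constructor
  · rintro ⟨hrs, _, hf⟩
    refine ⟨hrs, ?_⟩
    rcases hf with hf | hf
    · exact Or.inl (by rw [hf, ← key A A hrs])
    · exact Or.inr (by rw [hf, ← key A B hrs])
  · rintro ⟨hrs, hf⟩
    refine ⟨hrs, h.trans hrs, ?_⟩
    rcases hf with hf | hf
    · exact Or.inl (by rw [hf, key A A hrs])
    · exact Or.inr (by rw [hf, key A B hrs])

theorem base_hatV (X : ZFSet) (p : P) : (VSet.hatV X p : VSet P).base = p := base_hat _ _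

theorem hat_upair {a b : ZFSet} {q r : P} (h : q ≤ r) :
    (uV q (VSet.hatV a q) (VSet.hatV b q) : VSet P).restrict r
      = VSet.hatV (insert a {b} : ZFSet) r := by
  refine vset_ext (by rw [base_restrict, base_hatV]) (funext fun s => ?_)
  rw [elems_restrict, elems_uV, elems_hatV]
  ext f
  constructor
  · rintro ⟨hrs, hqs, (hf | hf)⟩
    · exact ⟨hrs, a, by simp [ZFSet.mem_insert_iff], by rwa [hatV_restrict a hqs] at hf⟩
    · exact ⟨hrs, b, by simp [ZFSet.mem_insert_iff, ZFSet.mem_singleton],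
        by rwa [hatV_restrict b hqs] at hf⟩
  · rintro ⟨hrs, c, hc, rfl⟩
    rcases (ZFSet.mem_insert_iff.1 hc) with rfl | hc
    · exact ⟨hrs, h.trans hrs, Or.inl (hatV_restrict c (h.trans hrs)).symm⟩
    · rw [ZFSet.mem_singleton] at hc
      subst hc
      exact ⟨hrs, h.trans hrs, Or.inr (hatV_restrict c (h.trans hrs)).symm⟩

theorem insert_self_eq (a : ZFSet) : (insert a {a} : ZFSet) = ({a} : ZFSet) := by
  apply ZFSet.ext
  intro z
  simp [ZFSet.mem_insert_iff, ZFSet.mem_singleton]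

theorem hat_pair (a b : ZFSet) (q : P) :
    (VSet.hatV (a.pair b) q : VSet P) = VSet.pairV q (VSet.hatV a q) (VSet.hatV b q) := by
  refine vset_ext (by rw [base_hatV, base_pairV]) (funext fun r => ?_)
  rw [elems_hatV, elems_pairV]
  ext f
  constructor
  · rintro ⟨hqr, c, hc, rfl⟩
    refine ⟨hqr, ?_⟩
    have hc' : c = ({a} : ZFSet) ∨ c = ({a, b} : ZFSet) := by
      have : c ∈ ({{a}, {a, b}} : ZFSet) := hc
      exact ZFSet.mem_pair.1 this
    rcases hc' with rfl | rfl
    · exact Or.inl (by rw [hat_upair hqr, insert_self_eq])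
    · exact Or.inr (by rw [hat_upair hqr])
  · rintro ⟨hqr, (hf | hf)⟩
    · refine ⟨hqr, ({a} : ZFSet), ?_, ?_⟩
      · show ({a} : ZFSet) ∈ ({{a}, {a, b}} : ZFSet)
        exact ZFSet.mem_pair.2 (Or.inl rfl)
      · rw [hf, hat_upair hqr, insert_self_eq]
    · refine ⟨hqr, ({a, b} : ZFSet), ?_, ?_⟩
      · show ({a, b} : ZFSet) ∈ ({{a}, {a, b}} : ZFSet)
        exact ZFSet.mem_pair.2 (Or.inr rfl)
      · rw [hf, hat_upair hqr]

end MyAux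

namespace MyAux

open VSet

set_option linter.unusedSectionVars false

variable {P : Type} [Preorder P]

theorem pairV_inj {q : P} {A B A' B' : VSet P} (h : VSet.pairV q A B = VSet.pairV q A' B') :
    A.restrict q = A'.restrict q ∧ B.restrict q = B'.restrict q := by
  have hU : ∀ {X Y X' Y' : VSet P},
      (uV q X Y : VSet P).restrict q = (uV q X' Y').restrict q →
      ∀ f : VSet P, (f = X.restrict q ∨ f = Y.restrict q)
        ↔ (f = X'.restrict q ∨ f = Y'.restrict q) := by
    intro X Y X' Y' h' f
    have h2 := congrFun (congrArg VSet.elems h') q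
    rw [elems_restrict, elems_restrict, elems_uV, elems_uV] at h2
    have h3 := Set.ext_iff.1 h2 f
    simpa using h3
  have hP : ∀ f : VSet P, (f = (uV q A A : VSet P).restrict q ∨ f = (uV q A B : VSet P).restrict q)
      ↔ (f = (uV q A' A' : VSet P).restrict q ∨ f = (uV q A' B' : VSet P).restrict q) := by
    intro f
    have h2 := congrFun (congrArg VSet.elems h) q
    rw [elems_pairV, elems_pairV] at h2
    have h3 := Set.ext_iff.1 h2 f
    simpa using h3
  rcases (hP _).1 (Or.inl rfl) with h1 | h1
  · -- uAA = uA'A'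
    have ha : A.restrict q = A'.restrict q := ((hU h1 _).1 (Or.inl rfl)).elim id id
    rcases (hP _).2 (Or.inr rfl) with h2 | h2
    · -- uA'B' = uAA
      have hb' : B'.restrict q = A.restrict q := ((hU h2 _).1 (Or.inr rfl)).elim id id
      rcases (hP _).1 (Or.inr rfl) with h3 | h3
      · have hb : B.restrict q = A'.restrict q := ((hU h3 _).1 (Or.inr rfl)).elim id id
        exact ⟨ha, hb.trans (ha.symm.trans hb'.symm)⟩
      · rcases (hU h3 _).1 (Or.inr rfl) with hb | hb
        · exact ⟨ha, (hb.trans ha.symm).trans hb'.symm⟩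
        · exact ⟨ha, hb⟩
    · -- uA'B' = uAB
      rcases (hU h2 _).1 (Or.inr rfl) with hb' | hb'
      · rcases (hU h2 _).2 (Or.inr rfl) with hb | hb
        · exact ⟨ha, (hb.trans ha.symm).trans hb'.symm⟩
        · exact ⟨ha, hb⟩
      · exact ⟨ha, hb'.symm⟩
  · -- uAA = uA'B'
    have ha' : A'.restrict q = A.restrict q := ((hU h1 _).2 (Or.inl rfl)).elim id id
    have hb' : B'.restrict q = A.restrict q := ((hU h1 _).2 (Or.inr rfl)).elim id id
    rcases (hP _).1 (Or.inr rfl) with h3 | h3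
    · have hb : B.restrict q = A'.restrict q := ((hU h3 _).1 (Or.inr rfl)).elim id id
      exact ⟨ha'.symm, (hb.trans ha').trans hb'.symm⟩
    · rcases (hU h3 _).1 (Or.inr rfl) with hb | hb
      · exact ⟨ha'.symm, (hb.trans ha').trans hb'.symm⟩
      · exact ⟨ha'.symm, hb⟩

theorem goodN_upairN {x y : VName P} (q : P) (hx : x.GoodN) (hy : y.GoodN) :
    (VSet.upairN q x y : VName P).GoodN := by
  refine ⟨fun r hne => hne.elim fun i => i.2.down, fun r i => ?_, fun r i s hrs => ?_⟩
  · obtain ⟨bl, hb⟩ := i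
    cases bl
    · exact ⟨base_restrictN y r, goodN_restrictN r hy⟩
    · exact ⟨base_restrictN x r, goodN_restrictN r hx⟩
  · obtain ⟨bl, hb⟩ := i
    refine ⟨⟨bl, ⟨hb.down.trans hrs⟩⟩, ?_⟩
    cases bl
    · exact Quotient.exact (restrict_restrict (⟦y⟧ : VSet P) hrs)
    · exact Quotient.exact (restrict_restrict (⟦x⟧ : VSet P) hrs)

theorem goodN_pairN {x y : VName P} (q : P) (hx : x.GoodN) (hy : y.GoodN) :
    (VSet.pairN q x y : VName P).GoodN := by
  refine ⟨fun r hne => hne.elim fun i => i.2.down, fun r i => ?_, fun r i s hrs => ?_⟩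
  · obtain ⟨bl, hb⟩ := i
    cases bl
    · exact ⟨base_restrictN (VSet.upairN q x y) r, goodN_restrictN r (goodN_upairN q hx hy)⟩
    · exact ⟨base_restrictN (VSet.upairN q x x) r, goodN_restrictN r (goodN_upairN q hx hx)⟩
  · obtain ⟨bl, hb⟩ := i
    refine ⟨⟨bl, ⟨hb.down.trans hrs⟩⟩, ?_⟩
    cases bl
    · exact Quotient.exact (restrict_restrict (⟦VSet.upairN q x y⟧ : VSet P) hrs)
    · exact Quotient.exact (restrict_restrict (⟦VSet.upairN q x x⟧ : VSet P) hrs)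

theorem good_out {f : VSet P} {p : P} (h : f ∈ Vp p) : f.out.GoodN := by
  obtain ⟨n, hn, hb, rfl⟩ := h
  have he : VName.Equiv n (⟦n⟧ : VSet P).out :=
    Quotient.exact ((Quotient.out_eq (⟦n⟧ : VSet P)).symm)
  exact goodN_congr he hn

theorem pairV_mem_Vp {p : P} {A B : VSet P} (hA : A ∈ Vp p) (hB : B ∈ Vp p) :
    VSet.pairV p A B ∈ Vp p :=
  ⟨VSet.pairN p A.out B.out, goodN_pairN p (good_out hA) (good_out hB), rfl, rfl⟩

theorem no_injection (x : ZFSet)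
    (g : {b : ZFSet // b ∈ ZFSet.powerset x} → {a : ZFSet // a ∈ x}) :
    ¬ Function.Injective g := by
  intro hg
  set m : Set {a : ZFSet // a ∈ x} → {b : ZFSet // b ∈ ZFSet.powerset x} := fun S =>
    ⟨x.sep (fun z => z ∈ Subtype.val '' S), by
      rw [ZFSet.mem_powerset]
      intro z hz
      exact (ZFSet.mem_sep.1 hz).1⟩ with hm
  have hminj : Function.Injective m := by
    intro S S' hSS'
    have h0 : x.sep (fun z => z ∈ Subtype.val '' S) = x.sep (fun z => z ∈ Subtype.val '' S') :=
      congrArg Subtype.val hSS'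
    ext ⟨a, ha⟩
    constructor
    · intro haS
      have : a ∈ x.sep (fun z => z ∈ Subtype.val '' S) :=
        ZFSet.mem_sep.2 ⟨ha, ⟨⟨a, ha⟩, haS, rfl⟩⟩
      rw [h0] at this
      obtain ⟨-, ⟨t, ht, hta⟩⟩ := ZFSet.mem_sep.1 this
      have ht' : t = (⟨a, ha⟩ : {a : ZFSet // a ∈ x}) := Subtype.ext hta
      rw [ht'] at ht
      exact ht
    · intro haS
      have : a ∈ x.sep (fun z => z ∈ Subtype.val '' S') :=
        ZFSet.mem_sep.2 ⟨ha, ⟨⟨a, ha⟩, haS, rfl⟩⟩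
      rw [← h0] at this
      obtain ⟨-, ⟨t, ht, hta⟩⟩ := ZFSet.mem_sep.1 this
      have ht' : t = (⟨a, ha⟩ : {a : ZFSet // a ∈ x}) := Subtype.ext hta
      rw [ht'] at ht
      exact ht
  exact Function.cantor_injective (fun S => g (m S)) (hg.comp hminj)

end MyAux

namespace MyAux

open VSet

set_option linter.unusedSectionVars false

variable {P : Type} [Preorder P]

theorem key (q : P) (A B : ZFSet)
    (hcard : ∀ g : {b : ZFSet // b ∈ B} → {a : ZFSet // a ∈ A}, ¬ Function.Injective g) :
    ¬ Forces q (.ex (.and (SetFml.fSub 0 1)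
        (.and (SetFml.fIsFunction 0) (SetFml.fOnto 0 2))))
      ![VSet.hatV (A.prod B) q, VSet.hatV B q] := by
  rintro ⟨f, hfV, hsub, hfun, honto⟩
  have hfr : f.restrict q = f := restrict_self hfV
  have step : ∀ b : ZFSet, b ∈ B → ∃ a : ZFSet, a ∈ A ∧
      VSet.pairV q (VSet.hatV a q) (VSet.hatV b q) ∈ f.elems q := by
    intro b hb
    have hb' : ((VSet.hatV b q : VSet P).restrict q)
        ∈ ((((VSet.hatV B q : VSet P).restrict q)).restrict q).elems q := by
      rw [hatV_restrict B le_rfl, hatV_restrict B le_rfl, hatV_restrict b le_rfl, elems_hatV]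
      exact ⟨le_rfl, b, hb, rfl⟩
    obtain ⟨τ, hτV, hpair⟩ := honto q le_rfl (VSet.hatV b q) (hatV_mem_Vp b q) q le_rfl hb'
    have hpair' : VSet.pairV q τ ((VSet.hatV b q : VSet P).restrict q)
        ∈ ((f.restrict q).restrict q).elems q := hpair
    rw [hfr, hfr, hatV_restrict b le_rfl] at hpair'
    have hτf : VSet.pairV q τ (VSet.hatV b q) ∈ Vp q :=
      pairV_mem_Vp hτV (hatV_mem_Vp b q)
    have hsubh : (VSet.pairV q τ (VSet.hatV b q) : VSet P).restrict q
        ∈ ((f.restrict q).restrict q).elems q := by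
      rw [hfr, hfr, restrict_self hτf]
      exact hpair'
    have hprod : (VSet.pairV q τ (VSet.hatV b q) : VSet P).restrict q
        ∈ (((VSet.hatV (A.prod B) q : VSet P).restrict q).restrict q).elems q :=
      hsub q le_rfl (VSet.pairV q τ (VSet.hatV b q)) hτf q le_rfl hsubh
    rw [restrict_self hτf, hatV_restrict _ le_rfl, hatV_restrict _ le_rfl,
      elems_hatV] at hprod
    obtain ⟨-, c, hc, hceq⟩ := hprod
    obtain ⟨a, ha, b', hb'B, rfl⟩ := ZFSet.mem_prod.1 hc
    rw [hat_pair] at hceq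
    obtain ⟨-, hbb'⟩ := pairV_inj hceq
    rw [hatV_restrict b le_rfl, hatV_restrict b' le_rfl] at hbb'
    have hbeq : b = b' := hatV_inj hbb'
    subst hbeq
    exact ⟨a, ha, hceq ▸ hpair'⟩
  choose g hgA hgf using step
  apply hcard (fun b => ⟨g b.1 b.2, hgA b.1 b.2⟩)
  rintro ⟨b₁, hb₁⟩ ⟨b₂, hb₂⟩ hG
  have hgg : g b₁ hb₁ = g b₂ hb₂ := congrArg Subtype.val hG
  have pm1 : VSet.pairV q ((((VSet.hatV (g b₁ hb₁) q : VSet P).restrict q).restrict q).restrict q)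
      (((VSet.hatV b₁ q : VSet P).restrict q).restrict q)
      ∈ ((((f.restrict q).restrict q).restrict q).restrict q).elems q := by
    rw [hfr, hfr, hfr, hfr, hatV_restrict (g b₁ hb₁) le_rfl, hatV_restrict (g b₁ hb₁) le_rfl,
      hatV_restrict (g b₁ hb₁) le_rfl, hatV_restrict b₁ le_rfl, hatV_restrict b₁ le_rfl]
    exact hgf b₁ hb₁
  have pm2 : VSet.pairV q ((((VSet.hatV (g b₁ hb₁) q : VSet P).restrict q).restrict q).restrict q)
      ((VSet.hatV b₂ q : VSet P).restrict q)
      ∈ ((((f.restrict q).restrict q).restrict q).restrict q).elems q := by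
    rw [hfr, hfr, hfr, hfr, hatV_restrict (g b₁ hb₁) le_rfl, hatV_restrict (g b₁ hb₁) le_rfl,
      hatV_restrict (g b₁ hb₁) le_rfl, hatV_restrict b₂ le_rfl]
    rw [hgg]
    exact hgf b₂ hb₂
  have hsv := hfun.2 q le_rfl (VSet.hatV (g b₁ hb₁) q) (hatV_mem_Vp (g b₁ hb₁) q) q le_rfl
    (VSet.hatV b₁ q) (hatV_mem_Vp b₁ q) q le_rfl
    (VSet.hatV b₂ q) (hatV_mem_Vp b₂ q) q le_rfl ⟨pm1, pm2⟩
  have hsv' : ((VSet.hatV b₁ q : VSet P).restrict q).restrict q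
      = (VSet.hatV b₂ q : VSet P).restrict q := hsv
  rw [hatV_restrict b₁ le_rfl, hatV_restrict b₁ le_rfl, hatV_restrict b₂ le_rfl] at hsv'
  exact Subtype.ext (hatV_inj hsv')

end MyAux


/-- **No forced surjection from `ℕ` onto `P(ℕ)` (nor from `P(ℕ)` onto `P(P(ℕ))`).**
For every `p`:  `⊩ₚ ¬∃f(f ⊆ (ℕ×P(ℕ))^(p) ∧ f is a function ∧ f is onto)`, and
likewise one level up. -/
theorem no_forced_surjection {P : Type} [PartialOrder P] (p : P) :
    Forces p
      (.not (.ex (.and (SetFml.fSub 0 1)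
        (.and (SetFml.fIsFunction 0) (SetFml.fOnto 0 2)))))
      ![VSet.hatV (ZFSet.omega.prod (ZFSet.powerset ZFSet.omega)) p,
        VSet.hatV (ZFSet.powerset ZFSet.omega) p] ∧
    Forces p
      (.not (.ex (.and (SetFml.fSub 0 1)
        (.and (SetFml.fIsFunction 0) (SetFml.fOnto 0 2)))))
      ![VSet.hatV ((ZFSet.powerset ZFSet.omega).prod
          (ZFSet.powerset (ZFSet.powerset ZFSet.omega))) p,
        VSet.hatV (ZFSet.powerset (ZFSet.powerset ZFSet.omega)) p] := by
  have main : ∀ (A B : ZFSet),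
      (∀ g : {b : ZFSet // b ∈ B} → {a : ZFSet // a ∈ A}, ¬ Function.Injective g) →
      Forces p
        (.not (.ex (.and (SetFml.fSub 0 1)
          (.and (SetFml.fIsFunction 0) (SetFml.fOnto 0 2)))))
        ![VSet.hatV (A.prod B) p, VSet.hatV B p] := by
    intro A B hcard q hpq hF
    have henv : (fun i => ((![VSet.hatV (A.prod B) p, VSet.hatV B p] : Fin 2 → VSet P) i).restrict q)
        = ![VSet.hatV (A.prod B) q, VSet.hatV B q] := by
      funext i
      fin_cases i
      · show (VSet.hatV (A.prod B) p : VSet P).restrict q = VSet.hatV (A.prod B) q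
        exact MyAux.hatV_restrict _ hpq
      · show (VSet.hatV B p : VSet P).restrict q = VSet.hatV B q
        exact MyAux.hatV_restrict _ hpq
    rw [henv] at hF
    exact MyAux.key q A B hcard hF
  exact ⟨main ZFSet.omega (ZFSet.powerset ZFSet.omega) (MyAux.no_injection ZFSet.omega),
    main (ZFSet.powerset ZFSet.omega) (ZFSet.powerset (ZFSet.powerset ZFSet.omega))
      (MyAux.no_injection (ZFSet.powerset ZFSet.omega))⟩

end
end

section
/- Let (ℙ,≤) be a partial order with the hereditary-subsets topology and p ∈ ℙ. Then ⊩_p |ℕ̂(p)| < |P(ℕ)^(p)| < |P(P(ℕ))^(p)|: it is forced at p that there is an injective function from ℕ̂(p) into P(ℕ)^(p) and one from P(ℕ)^(p) into P(P(ℕ))^(p), while no function from (ℕ×P(ℕ))^(p) is forced to be onto and no function from P(ℕ)^(p) × P(P(ℕ))^(p) is forced to be onto. -/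
set_option linter.unusedVariables false

noncomputable section

section Aux
set_option linter.unusedSectionVars false

open VSet

variable {P : Type} [Preorder P]

namespace VX

theorem vext {f g : VSet P} (hb : f.base = g.base) (he : ∀ q, f.elems q = g.elems q) :
    f = g := by
  induction f using Quotient.inductionOn with | h a =>
  induction g using Quotient.inductionOn with | h b =>
  cases a with | mk p ι el =>
  cases b with | mk p' ι' el' =>
  apply Quotient.sound
  refine ⟨hb, fun q => ⟨fun i => ?_, fun j => ?_⟩⟩
  · have hx : (⟦el q i⟧ : VSet P) ∈ VSet.elemsN (VName.mk p' ι' el') q := by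
      rw [show VSet.elemsN (VName.mk p' ι' el') q = VSet.elems ⟦VName.mk p' ι' el'⟧ q from rfl,
        ← he q]
      exact ⟨i, rfl⟩
    obtain ⟨j, hj⟩ := hx
    exact ⟨j, Quotient.exact hj.symm⟩
  · have hx : (⟦el' q j⟧ : VSet P) ∈ VSet.elemsN (VName.mk p ι el) q := by
      rw [show VSet.elemsN (VName.mk p ι el) q = VSet.elems ⟦VName.mk p ι el⟧ q from rfl, he q]
      exact ⟨j, rfl⟩
    obtain ⟨i, hi⟩ := hx
    exact ⟨i, Quotient.exact hi⟩

theorem base_restrict (f : VSet P) (r : P) : (f.restrict r).base = r := by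
  induction f using Quotient.inductionOn with | h a => cases a; rfl

theorem base_restrictN (a : VName P) (r : P) : (a.restrictN r).base = r := by
  cases a; rfl

theorem elems_restrict_of_le {r q : P} (h : r ≤ q) (f : VSet P) :
    (f.restrict r).elems q = f.elems q := by
  induction f using Quotient.inductionOn with | h a =>
  cases a with | mk p ι el =>
  ext x
  constructor
  · rintro ⟨i, rfl⟩; exact ⟨i.1, rfl⟩
  · rintro ⟨i, rfl⟩; exact ⟨⟨i, PLift.up h⟩, rfl⟩

theorem elems_restrict_of_not_le {r q : P} (h : ¬ r ≤ q) (f : VSet P) :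
    (f.restrict r).elems q = ∅ := by
  induction f using Quotient.inductionOn with | h a =>
  cases a with | mk p ι el =>
  ext x
  simp only [Set.mem_empty_iff_false, iff_false]
  rintro ⟨i, rfl⟩
  exact h i.2.down

theorem restrict_restrict {t r : P} (h : t ≤ r) (f : VSet P) :
    (f.restrict t).restrict r = f.restrict r := by
  refine vext (by rw [base_restrict, base_restrict]) (fun q => ?_)
  by_cases hr : r ≤ q
  · rw [elems_restrict_of_le hr, elems_restrict_of_le hr, elems_restrict_of_le (h.trans hr)]
  · rw [elems_restrict_of_not_le hr, elems_restrict_of_not_le hr]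

theorem base_of_mem_Vp {q : P} {f : VSet P} (hf : f ∈ Vp q) : f.base = q := by
  obtain ⟨a, _, hb, rfl⟩ := hf
  exact hb

theorem elems_eq_empty_of_not_le {q s : P} {f : VSet P} (hf : f ∈ Vp q) (h : ¬ q ≤ s) :
    f.elems s = ∅ := by
  obtain ⟨a, ha, hb, rfl⟩ := hf
  cases a with | mk p ι el =>
  ext x
  simp only [Set.mem_empty_iff_false, iff_false]
  rintro ⟨i, rfl⟩
  have : p ≤ s := ha.1 s ⟨i⟩
  have hpq : p = q := hb
  exact h (hpq ▸ this)

theorem restrict_self {q : P} {f : VSet P} (hf : f ∈ Vp q) : f.restrict q = f := by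
  refine vext ?_ (fun s => ?_)
  · rw [base_restrict, base_of_mem_Vp hf]
  · by_cases h : q ≤ s
    · rw [elems_restrict_of_le h]
    · rw [elems_restrict_of_not_le h, elems_eq_empty_of_not_le hf h]

theorem goodN_restrictN {a : VName P} (ha : VName.GoodN a) (r : P) :
    VName.GoodN (a.restrictN r) := by
  cases a with | mk p ι el =>
  obtain ⟨h1, h2, h3⟩ := ha
  refine ⟨fun q h => ?_, fun q i => h2 q i.1, fun q i r' hr => ?_⟩
  · obtain ⟨i⟩ := h; exact i.2.down
  · obtain ⟨j, hj⟩ := h3 q i.1 r' hr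
    exact ⟨⟨j, PLift.up (i.2.down.trans hr)⟩, hj⟩

theorem restrict_mem_Vp {q r : P} {f : VSet P} (hf : f ∈ Vp q) (h : q ≤ r) :
    f.restrict r ∈ Vp r := by
  obtain ⟨a, ha, hb, rfl⟩ := hf
  exact ⟨a.restrictN r, goodN_restrictN ha r, base_restrictN a r, rfl⟩

theorem equiv_iff_quot {a b : VName P} : VName.Equiv a b ↔ (⟦a⟧ : VSet P) = ⟦b⟧ :=
  ⟨fun h => Quotient.sound h, fun h => Quotient.exact h⟩

end VX
end Aux
section Aux2
set_option linter.unusedSectionVars false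
open VSet
variable {P : Type} [Preorder P]
namespace VX

/-- hat of a `PSet`. -/
def hatP (x : PSet) (p : P) : VSet P := ⟦VSet.hatN x p⟧

theorem base_hatN (x : PSet) (p : P) : (VSet.hatN x p).base = p := by cases x; rfl

theorem base_hatP (x : PSet) (p : P) : (hatP x p : VSet P).base = p := base_hatN x p

theorem elems_hatP_of_le {p q : P} (h : p ≤ q) (x : PSet) :
    (hatP x p : VSet P).elems q = Set.range fun i => (hatP (x.Func i) q : VSet P) := by
  cases x with | mk α A =>
  ext y
  constructor
  · rintro ⟨i, rfl⟩; exact ⟨i.1, rfl⟩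
  · rintro ⟨i, rfl⟩; exact ⟨⟨i, PLift.up h⟩, rfl⟩

theorem elems_hatP_of_not_le {p q : P} (h : ¬ p ≤ q) (x : PSet) :
    (hatP x p : VSet P).elems q = ∅ := by
  cases x with | mk α A =>
  ext y
  simp only [Set.mem_empty_iff_false, iff_false]
  rintro ⟨i, rfl⟩
  exact h i.2.down

theorem hatP_restrict {p r : P} (h : p ≤ r) (x : PSet) :
    (hatP x p : VSet P).restrict r = hatP x r := by
  refine vext (by rw [base_restrict, base_hatP]) (fun q => ?_)
  by_cases hr : r ≤ q
  · rw [elems_restrict_of_le hr, elems_hatP_of_le (h.trans hr), elems_hatP_of_le hr]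
  · rw [elems_restrict_of_not_le hr, elems_hatP_of_not_le hr]

theorem hatP_congr : ∀ {x y : PSet}, x.Equiv y → ∀ p : P, (hatP x p : VSet P) = hatP y p
  | ⟨α, A⟩, ⟨β, B⟩, h, p => by
    refine vext (by rw [base_hatP, base_hatP]) (fun q => ?_)
    by_cases hq : p ≤ q
    · rw [elems_hatP_of_le hq, elems_hatP_of_le hq]
      ext z
      constructor
      · rintro ⟨i, rfl⟩
        obtain ⟨j, hj⟩ := h.1 i
        exact ⟨j, (hatP_congr hj q).symm⟩
      · rintro ⟨j, rfl⟩
        obtain ⟨i, hi⟩ := h.2 j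
        exact ⟨i, hatP_congr hi q⟩
    · rw [elems_hatP_of_not_le hq, elems_hatP_of_not_le hq]

theorem hatP_inj : ∀ (x y : PSet) (p : P), (hatP x p : VSet P) = hatP y p → x.Equiv y
  | ⟨α, A⟩, ⟨β, B⟩, p, h => by
    have he := congrArg (fun f : VSet P => f.elems p) h
    simp only [elems_hatP_of_le (le_refl p)] at he
    constructor
    · intro i
      have : (hatP ((PSet.mk α A).Func i) p : VSet P)
          ∈ Set.range fun j => (hatP ((PSet.mk β B).Func j) p : VSet P) := by
        rw [← he]; exact ⟨i, rfl⟩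
      obtain ⟨j, hj⟩ := this
      exact ⟨j, hatP_inj _ _ p hj.symm⟩
    · intro j
      have : (hatP ((PSet.mk β B).Func j) p : VSet P)
          ∈ Set.range fun i => (hatP ((PSet.mk α A).Func i) p : VSet P) := by
        rw [he]; exact ⟨j, rfl⟩
      obtain ⟨i, hi⟩ := this
      exact ⟨i, hatP_inj _ _ p hi⟩

theorem hatV_def (a : ZFSet) (p : P) : VSet.hatV a p = hatP a.out p := rfl

theorem hatZ_mk (x : PSet) (p : P) : VSet.hatV (ZFSet.mk x) p = hatP x p :=
  hatP_congr (Quotient.mk_out x) p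

theorem hatV_restrict {p r : P} (h : p ≤ r) (a : ZFSet) :
    (VSet.hatV a p).restrict r = VSet.hatV a r := hatP_restrict h a.out

theorem hatV_inj {a b : ZFSet} {p : P} (h : VSet.hatV a p = VSet.hatV b p) : a = b := by
  have := hatP_inj a.out b.out p h
  rw [← ZFSet.mk_out a, ← ZFSet.mk_out b]
  exact ZFSet.sound this

theorem base_hatV (a : ZFSet) (p : P) : (VSet.hatV a p).base = p := base_hatP a.out p

theorem elems_hatV_of_le {p q : P} (h : p ≤ q) (a : ZFSet) :
    (VSet.hatV a p).elems q = {y | ∃ b ∈ a, y = VSet.hatV b q} := by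
  rw [hatV_def, elems_hatP_of_le h]
  ext y
  constructor
  · rintro ⟨i, rfl⟩
    refine ⟨ZFSet.mk (a.out.Func i), ?_, (hatZ_mk _ q).symm⟩
    have : ZFSet.mk (a.out.Func i) ∈ ZFSet.mk a.out := ZFSet.mk_mem_iff.2 (PSet.func_mem _ i)
    rwa [ZFSet.mk_out] at this
  · rintro ⟨b, hb, rfl⟩
    rw [← ZFSet.mk_out a, ← ZFSet.mk_out b, ZFSet.mk_mem_iff] at hb
    obtain ⟨i, hi⟩ := hb
    refine ⟨i, ?_⟩
    rw [← ZFSet.mk_out b, hatZ_mk]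
    exact (hatP_congr hi q).symm

theorem elems_hatV_of_not_le {p q : P} (h : ¬ p ≤ q) (a : ZFSet) :
    (VSet.hatV a p).elems q = ∅ := elems_hatP_of_not_le h a.out

theorem goodN_hatN : ∀ (x : PSet) (p : P), VName.GoodN (VSet.hatN x p)
  | ⟨α, A⟩, p => by
    refine ⟨fun q h => ?_, fun q i => ⟨base_hatN _ _, goodN_hatN (A i.1) q⟩,
      fun q i r hr => ?_⟩
    · obtain ⟨i⟩ := h; exact i.2.down
    · refine ⟨⟨i.1, PLift.up (i.2.down.trans hr)⟩, ?_⟩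
      rw [equiv_iff_quot]
      exact hatP_restrict hr (A i.1)

theorem hatV_mem_Vp (a : ZFSet) (p : P) : VSet.hatV a p ∈ Vp p :=
  ⟨VSet.hatN a.out p, goodN_hatN a.out p, base_hatN a.out p, rfl⟩

end VX
end Aux2
section Aux3
set_option linter.unusedSectionVars false
open VSet
variable {P : Type} [Preorder P]
namespace VX

/-- unordered pair at the `VSet` level. -/
def uV (t : P) (A B : VSet P) : VSet P := ⟦VSet.upairN t A.out B.out⟧

theorem base_uV (t : P) (A B : VSet P) : (uV t A B).base = t := rfl

theorem elems_upairN_of_le {t s : P} (h : t ≤ s) (a b : VName P) :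
    VSet.elemsN (VSet.upairN t a b) s
      = {VSet.restrict ⟦a⟧ s, VSet.restrict ⟦b⟧ s} := by
  ext y
  constructor
  · rintro ⟨⟨bl, hle⟩, rfl⟩
    cases bl
    · right; rfl
    · left; rfl
  · rintro (rfl | rfl)
    · exact ⟨⟨true, PLift.up h⟩, rfl⟩
    · exact ⟨⟨false, PLift.up h⟩, rfl⟩

theorem elems_upairN_of_not_le {t s : P} (h : ¬ t ≤ s) (a b : VName P) :
    VSet.elemsN (VSet.upairN t a b) s = ∅ := by
  ext y
  simp only [Set.mem_empty_iff_false, iff_false]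
  rintro ⟨⟨bl, hle⟩, rfl⟩
  exact h hle.down

theorem elems_uV_of_le {t s : P} (h : t ≤ s) (A B : VSet P) :
    (uV t A B).elems s = {A.restrict s, B.restrict s} := by
  show VSet.elemsN (VSet.upairN t A.out B.out) s = _
  rw [elems_upairN_of_le h, Quotient.out_eq, Quotient.out_eq]

theorem elems_uV_of_not_le {t s : P} (h : ¬ t ≤ s) (A B : VSet P) :
    (uV t A B).elems s = ∅ := elems_upairN_of_not_le h _ _

theorem uV_eq {t : P} {A B A' B' : VSet P}
    (h : ∀ s, t ≤ s → A.restrict s = A'.restrict s ∧ B.restrict s = B'.restrict s) :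
    uV t A B = uV t A' B' := by
  refine vext rfl (fun s => ?_)
  by_cases hs : t ≤ s
  · rw [elems_uV_of_le hs, elems_uV_of_le hs, (h s hs).1, (h s hs).2]
  · rw [elems_uV_of_not_le hs, elems_uV_of_not_le hs]

theorem restrict_upairN_eq {q t : P} (h : q ≤ t) (a b : VName P) :
    (⟦(VSet.upairN q a b).restrictN t⟧ : VSet P) = uV t ⟦a⟧ ⟦b⟧ := by
  refine vext (by rw [show (⟦(VSet.upairN q a b).restrictN t⟧ : VSet P)
      = VSet.restrict ⟦VSet.upairN q a b⟧ t from rfl, base_restrict, base_uV]) (fun s => ?_)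
  show (VSet.restrict ⟦VSet.upairN q a b⟧ t).elems s = _
  by_cases hs : t ≤ s
  · rw [elems_restrict_of_le hs, elems_uV_of_le hs]
    show VSet.elemsN (VSet.upairN q a b) s = _
    rw [elems_upairN_of_le (h.trans hs)]
  · rw [elems_restrict_of_not_le hs, elems_uV_of_not_le hs]

theorem base_pairN (q : P) (a b : VName P) : (VSet.pairN q a b).base = q := rfl

theorem base_pairV (q : P) (A B : VSet P) : (VSet.pairV q A B).base = q := rfl

theorem elems_pairN_of_le {q t : P} (h : q ≤ t) (a b : VName P) :
    VSet.elemsN (VSet.pairN q a b) t = {uV t ⟦a⟧ ⟦a⟧, uV t ⟦a⟧ ⟦b⟧} := by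
  ext y
  constructor
  · rintro ⟨⟨bl, hle⟩, rfl⟩
    cases bl
    · right; exact restrict_upairN_eq h a b
    · left; exact restrict_upairN_eq h a a
  · rintro (rfl | rfl)
    · exact ⟨⟨true, PLift.up h⟩, restrict_upairN_eq h a a⟩
    · exact ⟨⟨false, PLift.up h⟩, restrict_upairN_eq h a b⟩

theorem elems_pairN_of_not_le {q t : P} (h : ¬ q ≤ t) (a b : VName P) :
    VSet.elemsN (VSet.pairN q a b) t = ∅ := by
  ext y
  simp only [Set.mem_empty_iff_false, iff_false]
  rintro ⟨⟨bl, hle⟩, rfl⟩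
  exact h hle.down

theorem elems_pairV_of_le {q t : P} (h : q ≤ t) (A B : VSet P) :
    (VSet.pairV q A B).elems t = {uV t A A, uV t A B} := by
  show VSet.elemsN (VSet.pairN q A.out B.out) t = _
  rw [elems_pairN_of_le h, Quotient.out_eq, Quotient.out_eq]

theorem elems_pairV_of_not_le {q t : P} (h : ¬ q ≤ t) (A B : VSet P) :
    (VSet.pairV q A B).elems t = ∅ := elems_pairN_of_not_le h _ _

theorem pairV_eq_mk {q : P} {A B : VSet P} {a b : VName P} (ha : (⟦a⟧ : VSet P) = A)
    (hb : (⟦b⟧ : VSet P) = B) : VSet.pairV q A B = ⟦VSet.pairN q a b⟧ := by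
  refine vext rfl (fun t => ?_)
  by_cases ht : q ≤ t
  · rw [elems_pairV_of_le ht]
    show _ = VSet.elemsN (VSet.pairN q a b) t
    rw [elems_pairN_of_le ht, ha, hb]
  · rw [elems_pairV_of_not_le ht]
    show _ = VSet.elemsN (VSet.pairN q a b) t
    rw [elems_pairN_of_not_le ht]

theorem goodN_upairN {a b : VName P} (ha : VName.GoodN a) (hb : VName.GoodN b) (t : P) :
    VName.GoodN (VSet.upairN t a b) := by
  refine ⟨fun q h => ?_, fun q i => ?_, fun q i r hr => ?_⟩
  · obtain ⟨i⟩ := h; exact i.2.down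
  · rcases i with ⟨bl, hle⟩
    cases bl
    · exact ⟨base_restrictN b q, goodN_restrictN hb q⟩
    · exact ⟨base_restrictN a q, goodN_restrictN ha q⟩
  · rcases i with ⟨bl, hle⟩
    refine ⟨⟨bl, PLift.up (hle.down.trans hr)⟩, ?_⟩
    rw [equiv_iff_quot]
    cases bl
    · exact restrict_restrict hr ⟦b⟧
    · exact restrict_restrict hr ⟦a⟧

theorem goodN_pairN {a b : VName P} (ha : VName.GoodN a) (hb : VName.GoodN b) (q : P) :
    VName.GoodN (VSet.pairN q a b) := by
  refine ⟨fun t h => ?_, fun t i => ?_, fun t i r hr => ?_⟩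
  · obtain ⟨i⟩ := h; exact i.2.down
  · rcases i with ⟨bl, hle⟩
    cases bl
    · show ((VSet.upairN q a b).restrictN t).base = t ∧ VName.GoodN ((VSet.upairN q a b).restrictN t)
      exact ⟨base_restrictN _ t, goodN_restrictN (goodN_upairN ha hb q) t⟩
    · show ((VSet.upairN q a a).restrictN t).base = t ∧ VName.GoodN ((VSet.upairN q a a).restrictN t)
      exact ⟨base_restrictN _ t, goodN_restrictN (goodN_upairN ha ha q) t⟩
  · rcases i with ⟨bl, hle⟩
    refine ⟨⟨bl, PLift.up (hle.down.trans hr)⟩, ?_⟩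
    rw [equiv_iff_quot]
    cases bl
    · exact restrict_restrict hr ⟦VSet.upairN q a b⟧
    · exact restrict_restrict hr ⟦VSet.upairN q a a⟧

theorem pairV_mem_Vp {q : P} {A B : VSet P} (hA : A ∈ Vp q) (hB : B ∈ Vp q) :
    VSet.pairV q A B ∈ Vp q := by
  obtain ⟨a, ha, hba, rfl⟩ := hA
  obtain ⟨b, hb, hbb, rfl⟩ := hB
  exact ⟨VSet.pairN q a b, goodN_pairN ha hb q, rfl, (pairV_eq_mk rfl rfl).symm⟩

end VX
end Aux3
section Aux4
set_option linter.unusedSectionVars false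
open VSet
variable {P : Type} [Preorder P]
namespace VX

theorem hat_upair (n A : ZFSet) (t : P) :
    VSet.hatV ({n, A} : ZFSet) t = uV t (VSet.hatV n t) (VSet.hatV A t) := by
  refine vext (by rw [base_hatV, base_uV]) (fun s => ?_)
  by_cases hs : t ≤ s
  · rw [elems_hatV_of_le hs, elems_uV_of_le hs, hatV_restrict hs, hatV_restrict hs]
    ext y
    constructor
    · rintro ⟨b, hb, rfl⟩
      rcases ZFSet.mem_pair.1 hb with rfl | rfl
      · left; rfl
      · right; rfl
    · rintro (rfl | rfl)
      · exact ⟨n, ZFSet.mem_pair.2 (Or.inl rfl), rfl⟩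
      · exact ⟨A, ZFSet.mem_pair.2 (Or.inr rfl), rfl⟩
  · rw [elems_hatV_of_not_le hs, elems_uV_of_not_le hs]

theorem hat_singleton (n : ZFSet) (t : P) :
    VSet.hatV ({n} : ZFSet) t = uV t (VSet.hatV n t) (VSet.hatV n t) := by
  refine vext (by rw [base_hatV, base_uV]) (fun s => ?_)
  by_cases hs : t ≤ s
  · rw [elems_hatV_of_le hs, elems_uV_of_le hs, hatV_restrict hs]
    ext y
    constructor
    · rintro ⟨b, hb, rfl⟩
      rcases ZFSet.mem_singleton.1 hb with rfl
      left; rfl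
    · rintro (rfl | rfl) <;> exact ⟨n, ZFSet.mem_singleton.2 rfl, rfl⟩
  · rw [elems_hatV_of_not_le hs, elems_uV_of_not_le hs]

theorem uV_hat_shift {r t : P} (h : r ≤ t) (n A : ZFSet) :
    uV t (VSet.hatV n r) (VSet.hatV A r) = uV t (VSet.hatV n t) (VSet.hatV A t) := by
  refine uV_eq (fun s hs => ?_)
  rw [hatV_restrict (h.trans hs), hatV_restrict (h.trans hs), hatV_restrict hs,
    hatV_restrict hs]
  exact ⟨rfl, rfl⟩

theorem hat_pair (n A : ZFSet) (r : P) :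
    VSet.hatV (n.pair A) r = VSet.pairV r (VSet.hatV n r) (VSet.hatV A r) := by
  refine vext (by rw [base_hatV, base_pairV]) (fun t => ?_)
  by_cases ht : r ≤ t
  · rw [elems_hatV_of_le ht, elems_pairV_of_le ht, uV_hat_shift ht n n, uV_hat_shift ht n A,
      ← hat_singleton n t, ← hat_upair n A t]
    ext y
    constructor
    · rintro ⟨b, hb, rfl⟩
      rcases ZFSet.mem_pair.1 hb with rfl | rfl
      · left; rfl
      · right; rfl
    · rintro (rfl | rfl)
      · exact ⟨{n}, ZFSet.mem_pair.2 (Or.inl rfl), rfl⟩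
      · exact ⟨{n, A}, ZFSet.mem_pair.2 (Or.inr rfl), rfl⟩
  · rw [elems_hatV_of_not_le ht, elems_pairV_of_not_le ht]

theorem uV_inj {q : P} {A B A' B' : VSet P} (hA : A ∈ Vp q) (hB : B ∈ Vp q)
    (hA' : A' ∈ Vp q) (hB' : B' ∈ Vp q) (h : uV q A B = uV q A' B') :
    ({A, B} : Set (VSet P)) = {A', B'} := by
  have := congrArg (fun f : VSet P => f.elems q) h
  simp only [elems_uV_of_le (le_refl q)] at this
  rwa [restrict_self hA, restrict_self hB, restrict_self hA', restrict_self hB'] at this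

theorem pairV_inj {q : P} {C B C' B' : VSet P} (hC : C ∈ Vp q) (hB : B ∈ Vp q)
    (hC' : C' ∈ Vp q) (hB' : B' ∈ Vp q) (h : VSet.pairV q C B = VSet.pairV q C' B') :
    C = C' ∧ B = B' := by
  have h1 := congrArg (fun f : VSet P => f.elems q) h
  simp only [elems_pairV_of_le (le_refl q)] at h1
  rcases Set.pair_eq_pair_iff.1 h1 with ⟨e1, e2⟩ | ⟨e1, e2⟩
  · have k1 := Set.pair_eq_pair_iff.1 (uV_inj hC hC hC' hC' e1)
    have hCC' : C = C' := by rcases k1 with ⟨h', -⟩ | ⟨h', -⟩ <;> exact h'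
    subst hCC'
    have k2 := Set.pair_eq_pair_iff.1 (uV_inj hC hB hC hB' e2)
    rcases k2 with ⟨-, h2⟩ | ⟨h2, h3⟩
    · exact ⟨rfl, h2⟩
    · exact ⟨rfl, h3.trans h2⟩
  · have k1 := Set.pair_eq_pair_iff.1 (uV_inj hC hC hC' hB' e1)
    have k2 := Set.pair_eq_pair_iff.1 (uV_inj hC hB hC' hC' e2)
    have hCC' : C = C' := by rcases k1 with ⟨h', _⟩ | ⟨_, h'⟩ <;> exact h'
    have hCB' : C = B' := by rcases k1 with ⟨_, h'⟩ | ⟨h', _⟩ <;> exact h'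
    have hBC' : B = C' := by rcases k2 with ⟨_, h'⟩ | ⟨_, h'⟩ <;> exact h'
    exact ⟨hCC', (hBC'.trans hCC'.symm).trans hCB'⟩

theorem zf_cantor (a : ZFSet) (i : {B : ZFSet // B ∈ a.powerset} → {n : ZFSet // n ∈ a})
    (hi : Function.Injective i) : False := by
  classical
  let p : ZFSet → Prop :=
    fun n => ∀ (B) (h : B ∈ a.powerset), (i ⟨B, h⟩ : ZFSet) = n → n ∉ B
  have hDp : ZFSet.sep p a ∈ a.powerset :=
    ZFSet.mem_powerset.2 fun z hz => (ZFSet.mem_sep.1 hz).1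
  by_cases hmem : (i ⟨ZFSet.sep p a, hDp⟩ : ZFSet) ∈ ZFSet.sep p a
  · obtain ⟨-, hprop⟩ := ZFSet.mem_sep.1 hmem
    exact hprop _ hDp rfl hmem
  · apply hmem
    refine ZFSet.mem_sep.2 ⟨(i ⟨ZFSet.sep p a, hDp⟩).2, ?_⟩
    intro B h hBn hn
    have hBD : (⟨B, h⟩ : {B // B ∈ a.powerset}) = ⟨ZFSet.sep p a, hDp⟩ := hi (Subtype.ext hBn)
    obtain rfl : B = ZFSet.sep p a := congrArg Subtype.val hBD
    exact hmem hn

end VX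
end Aux4
section Aux5
set_option linter.unusedSectionVars false
open VSet
variable {P : Type} [Preorder P]
namespace VX

theorem pair_hat_extract {q : P} {C B : VSet P} {n A : ZFSet} (hC : C ∈ Vp q) (hB : B ∈ Vp q)
    (h : VSet.pairV q C B = VSet.hatV (n.pair A) q) :
    C = VSet.hatV n q ∧ B = VSet.hatV A q := by
  rw [hat_pair] at h
  exact pairV_inj hC hB (hatV_mem_Vp n q) (hatV_mem_Vp A q) h

theorem restrict_env {n : ℕ} {q : P} {s : Fin n → VSet P} (h : ∀ i, s i ∈ Vp q) :
    (fun i => (s i).restrict q) = s := funext fun i => restrict_self (h i)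

theorem consVp {q : P} {m : ℕ} {x : VSet P} {s : Fin m → VSet P} (hx : x ∈ Vp q)
    (hs : ∀ i, s i ∈ Vp q) : ∀ i, (Fin.cons x s : Fin (m + 1) → VSet P) i ∈ Vp q :=
  fun i => Fin.cases hx hs i

theorem forces_not_surj (p : P) (a : ZFSet) :
    Forces p
      (.not (.ex (.and (SetFml.fSub 0 1)
        (.and (SetFml.fIsFunction 0) (SetFml.fOnto 0 2)))))
      ![VSet.hatV (a.prod a.powerset) p, VSet.hatV a.powerset p] := by
  intro q hq hEx
  have henv : (fun i =>
      VSet.restrict ((![VSet.hatV (a.prod a.powerset) p, VSet.hatV a.powerset p] :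
        Fin 2 → VSet P) i) q)
      = ![VSet.hatV (a.prod a.powerset) q, VSet.hatV a.powerset q] := by
    funext i
    fin_cases i <;>
      simp only [Matrix.cons_val_zero, Matrix.cons_val_one, Matrix.head_cons] <;>
      exact hatV_restrict hq _
  rw [henv] at hEx
  obtain ⟨σ, hσ, hF⟩ := hEx
  have hs3 : ∀ i, (Fin.cons σ
      ![VSet.hatV (a.prod a.powerset) q, VSet.hatV a.powerset q] : Fin 3 → VSet P) i ∈ Vp q := by
    refine consVp hσ (fun i => ?_)
    fin_cases i <;>
      simp only [Matrix.cons_val_zero, Matrix.cons_val_one, Matrix.head_cons] <;>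
      exact hatV_mem_Vp _ _
  have hSub : Forces q (SetFml.fSub 0 1)
      (Fin.cons σ ![VSet.hatV (a.prod a.powerset) q, VSet.hatV a.powerset q]) := hF.1
  have hFun := hF.2.1
  have hOnto := hF.2.2
  -- key: every member of the (hatted) powerset is hit by a hatted pair in σ
  have key : ∀ B, B ∈ a.powerset → ∃ n, n ∈ a ∧
      VSet.pairV q (VSet.hatV n q) (VSet.hatV B q) ∈ VSet.elems σ q := by
    intro B hB
    have t1 := hOnto q le_rfl (VSet.hatV B q) (hatV_mem_Vp B q)
    rw [restrict_env hs3] at t1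
    have t2 := t1 q le_rfl
    rw [restrict_env (consVp (hatV_mem_Vp B q) hs3)] at t2
    have hmem : VSet.hatV B q ∈ VSet.elems (VSet.hatV a.powerset q) q := by
      rw [elems_hatV_of_le le_rfl]; exact ⟨B, hB, rfl⟩
    have t3 := t2 hmem
    obtain ⟨C, hC, hpm⟩ := t3
    have hpm' : VSet.pairV q C (VSet.hatV B q) ∈ VSet.elems σ q := hpm
    have hsub1 := hSub q le_rfl (VSet.pairV q C (VSet.hatV B q))
      (pairV_mem_Vp hC (hatV_mem_Vp B q))
    rw [restrict_env hs3] at hsub1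
    have hsub2 := hsub1 q le_rfl
    rw [restrict_env (consVp (pairV_mem_Vp hC (hatV_mem_Vp B q)) hs3)] at hsub2
    have hprod : VSet.pairV q C (VSet.hatV B q)
        ∈ VSet.elems (VSet.hatV (a.prod a.powerset) q) q := hsub2 hpm'
    rw [elems_hatV_of_le le_rfl] at hprod
    obtain ⟨z, hz, hzeq⟩ := hprod
    obtain ⟨n, hn, A, hA, rfl⟩ := ZFSet.mem_prod.1 hz
    obtain ⟨hCn, hBA⟩ := pair_hat_extract hC (hatV_mem_Vp B q) hzeq
    obtain rfl : B = A := hatV_inj hBA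
    refine ⟨n, hn, ?_⟩
    rw [← hCn]
    exact hpm'
  -- single-valuedness
  have sv : ∀ (n B B' : ZFSet),
      VSet.pairV q (VSet.hatV n q) (VSet.hatV B q) ∈ VSet.elems σ q →
      VSet.pairV q (VSet.hatV n q) (VSet.hatV B' q) ∈ VSet.elems σ q →
      VSet.hatV B q = VSet.hatV B' q := by
    intro n B B' h1 h2
    have hsv := hFun.2
    have t1 := hsv q le_rfl (VSet.hatV n q) (hatV_mem_Vp n q)
    rw [restrict_env hs3] at t1
    have t2 := t1 q le_rfl (VSet.hatV B q) (hatV_mem_Vp B q)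
    rw [restrict_env (consVp (hatV_mem_Vp n q) hs3)] at t2
    have t3 := t2 q le_rfl (VSet.hatV B' q) (hatV_mem_Vp B' q)
    rw [restrict_env (consVp (hatV_mem_Vp B q) (consVp (hatV_mem_Vp n q) hs3))] at t3
    have t4 := t3 q le_rfl
    rw [restrict_env (consVp (hatV_mem_Vp B' q)
      (consVp (hatV_mem_Vp B q) (consVp (hatV_mem_Vp n q) hs3)))] at t4
    exact t4 ⟨h1, h2⟩
  classical
  refine zf_cantor a (fun B => ⟨Classical.choose (key B.1 B.2),
    (Classical.choose_spec (key B.1 B.2)).1⟩) ?_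
  intro B B' hBB'
  have e : Classical.choose (key B.1 B.2) = Classical.choose (key B'.1 B'.2) :=
    congrArg Subtype.val hBB'
  have m1 := (Classical.choose_spec (key B.1 B.2)).2
  have m2 := (Classical.choose_spec (key B'.1 B'.2)).2
  rw [e] at m1
  exact Subtype.ext (hatV_inj (sv _ _ _ m1 m2))

end VX
end Aux5
section Aux6
set_option linter.unusedSectionVars false
open VSet
variable {P : Type} [Preorder P]
namespace VX

theorem restrict_cons {m : ℕ} (q : P) (x : VSet P) (s : Fin m → VSet P) :
    (fun i => ((Fin.cons x s : Fin (m + 1) → VSet P) i).restrict q)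
      = Fin.cons (x.restrict q) (fun i => (s i).restrict q) :=
  funext fun i => Fin.cases rfl (fun j => rfl) i

theorem singleton_mem_powerset {a x : ZFSet} (hx : x ∈ a) : ({x} : ZFSet) ∈ a.powerset :=
  ZFSet.mem_powerset.2 fun z hz => by rwa [ZFSet.mem_singleton.1 hz]

theorem forces_inj (p : P) (a : ZFSet) :
    Forces p (.ex (SetFml.fInjFromTo 0 1 2)) ![VSet.hatV a p, VSet.hatV a.powerset p] := by
  classical
  set F : ZFSet := ZFSet.map (fun x => ({x} : ZFSet)) a with hFdef
  have memF : ∀ y, y ∈ F ↔ ∃ x ∈ a, x.pair {x} = y := fun y => ZFSet.mem_map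
  -- environment restriction helper
  have hE : ∀ q r : P, q ≤ r →
      (fun i => ((Fin.cons (VSet.hatV F q) ![VSet.hatV a q, VSet.hatV a.powerset q] :
        Fin 3 → VSet P) i).restrict r)
      = Fin.cons (VSet.hatV F r) ![VSet.hatV a r, VSet.hatV a.powerset r] := by
    intro q r h
    funext i
    refine Fin.cases ?_ (fun j => ?_) i
    · exact hatV_restrict h F
    · fin_cases j <;>
        simp only [Fin.cons_succ, Matrix.cons_val_zero, Matrix.cons_val_one, Matrix.head_cons] <;>
        exact hatV_restrict h _
  refine ⟨VSet.hatV F p, hatV_mem_Vp F p, ⟨?_, ?_, ?_⟩, ?_⟩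
  · -- every element of F is a pair of members of a and powerset a
    intro q1 h1 Z hZ
    have e0 := hE p q1 h1
    show Forces q1 _ (Fin.cons Z _)
    rw [e0]
    intro r hr hmem
    rw [restrict_cons, hE q1 r hr] at hmem ⊢
    have hmem' : VSet.restrict Z r ∈ VSet.elems (VSet.hatV F r) r := hmem
    rw [elems_hatV_of_le le_rfl] at hmem'
    obtain ⟨y, hy, heq⟩ := hmem'
    obtain ⟨x, hx, rfl⟩ := (memF y).1 hy
    refine ⟨VSet.hatV x r, hatV_mem_Vp x r, VSet.hatV ({x} : ZFSet) r, hatV_mem_Vp _ _,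
      ?_, ?_, ?_⟩
    · show VSet.hatV x r ∈ VSet.elems (VSet.hatV a r) r
      rw [elems_hatV_of_le le_rfl]
      exact ⟨x, hx, rfl⟩
    · show VSet.hatV ({x} : ZFSet) r ∈ VSet.elems (VSet.hatV a.powerset r) r
      rw [elems_hatV_of_le le_rfl]
      exact ⟨{x}, singleton_mem_powerset hx, rfl⟩
    · show VSet.restrict Z r = VSet.pairV r (VSet.hatV x r) (VSet.hatV ({x} : ZFSet) r)
      rw [heq, hat_pair]
  · -- single valued
    intro q1 h1 Z hZ
    show Forces q1 _ (Fin.cons Z _)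
    rw [hE p q1 h1]
    intro q2 h2 Y hY
    show Forces q2 _ (Fin.cons Y _)
    rw [restrict_cons, hE q1 q2 h2]
    intro q3 h3 X hX
    show Forces q3 _ (Fin.cons X _)
    rw [restrict_cons, restrict_cons, hE q2 q3 h3, restrict_restrict h3]
    intro r hr hyp
    rw [restrict_cons, restrict_cons, restrict_cons, hE q3 r hr,
      restrict_restrict hr, restrict_restrict hr] at hyp ⊢
    have hZr : VSet.restrict Z r ∈ Vp r := restrict_mem_Vp hZ (h2.trans (h3.trans hr))
    have hYr : VSet.restrict Y r ∈ Vp r := restrict_mem_Vp hY (h3.trans hr)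
    have hXr : VSet.restrict X r ∈ Vp r := restrict_mem_Vp hX hr
    have k1 : VSet.pairV r (VSet.restrict Z r) (VSet.restrict Y r)
        ∈ VSet.elems (VSet.hatV F r) r := hyp.1
    have k2 : VSet.pairV r (VSet.restrict Z r) (VSet.restrict X r)
        ∈ VSet.elems (VSet.hatV F r) r := hyp.2
    rw [elems_hatV_of_le le_rfl] at k1 k2
    obtain ⟨y1, hy1, he1⟩ := k1
    obtain ⟨x1, hx1, rfl⟩ := (memF y1).1 hy1
    obtain ⟨y2, hy2, he2⟩ := k2
    obtain ⟨x2, hx2, rfl⟩ := (memF y2).1 hy2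
    obtain ⟨hZ1, hY1⟩ := pair_hat_extract hZr hYr he1
    obtain ⟨hZ2, hX2⟩ := pair_hat_extract hZr hXr he2
    have hx12 : x1 = x2 := hatV_inj (hZ1.symm.trans hZ2)
    show VSet.restrict Y r = VSet.restrict X r
    rw [hY1, hX2, hx12]
  · -- total
    intro q1 h1 Z hZ
    show Forces q1 _ (Fin.cons Z _)
    rw [hE p q1 h1]
    intro r hr hmem
    rw [restrict_cons, hE q1 r hr] at hmem ⊢
    have hmem' : VSet.restrict Z r ∈ VSet.elems (VSet.hatV a r) r := hmem
    rw [elems_hatV_of_le le_rfl] at hmem'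
    obtain ⟨x, hx, heq⟩ := hmem'
    refine ⟨VSet.hatV ({x} : ZFSet) r, hatV_mem_Vp _ _, ?_⟩
    show VSet.pairV r (VSet.restrict Z r) (VSet.hatV ({x} : ZFSet) r)
        ∈ VSet.elems (VSet.hatV F r) r
    rw [heq, ← hat_pair, elems_hatV_of_le le_rfl]
    exact ⟨x.pair {x}, (memF _).2 ⟨x, hx, rfl⟩, rfl⟩
  · -- injective
    intro q1 h1 Z hZ
    show Forces q1 _ (Fin.cons Z _)
    rw [hE p q1 h1]
    intro q2 h2 Y hY
    show Forces q2 _ (Fin.cons Y _)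
    rw [restrict_cons, hE q1 q2 h2]
    intro q3 h3 X hX
    show Forces q3 _ (Fin.cons X _)
    rw [restrict_cons, restrict_cons, hE q2 q3 h3, restrict_restrict h3]
    intro r hr hyp
    rw [restrict_cons, restrict_cons, restrict_cons, hE q3 r hr,
      restrict_restrict hr, restrict_restrict hr] at hyp ⊢
    have hZr : VSet.restrict Z r ∈ Vp r := restrict_mem_Vp hZ (h2.trans (h3.trans hr))
    have hYr : VSet.restrict Y r ∈ Vp r := restrict_mem_Vp hY (h3.trans hr)
    have hXr : VSet.restrict X r ∈ Vp r := restrict_mem_Vp hX hr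
    have k1 : VSet.pairV r (VSet.restrict Z r) (VSet.restrict X r)
        ∈ VSet.elems (VSet.hatV F r) r := hyp.1
    have k2 : VSet.pairV r (VSet.restrict Y r) (VSet.restrict X r)
        ∈ VSet.elems (VSet.hatV F r) r := hyp.2
    rw [elems_hatV_of_le le_rfl] at k1 k2
    obtain ⟨y1, hy1, he1⟩ := k1
    obtain ⟨x1, hx1, rfl⟩ := (memF y1).1 hy1
    obtain ⟨y2, hy2, he2⟩ := k2
    obtain ⟨x2, hx2, rfl⟩ := (memF y2).1 hy2
    obtain ⟨hZ1, hX1⟩ := pair_hat_extract hZr hXr he1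
    obtain ⟨hY2, hX2⟩ := pair_hat_extract hYr hXr he2
    have hsing : ({x1} : ZFSet) = {x2} := hatV_inj (hX1.symm.trans hX2)
    have hx12 : x1 = x2 := ZFSet.singleton_injective hsing
    show VSet.restrict Z r = VSet.restrict Y r
    rw [hZ1, hY2, hx12]

end VX
end Aux6
/-- **`⊩ₚ |ℕ̂(p)| < |P(ℕ)^(p)| < |P(P(ℕ))^(p)|`:**  it is forced at `p` that there is
an injective function from `ℕ̂(p)` into `P(ℕ)^(p)` and one from `P(ℕ)^(p)` into
`P(P(ℕ))^(p)`, while no function contained in `(ℕ×P(ℕ))^(p)` is forced to be onto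
`P(ℕ)^(p)` and no function contained in `P(ℕ)^(p) × P(P(ℕ))^(p)` is forced to be onto
`P(P(ℕ))^(p)`. -/
theorem hat_cardinalities_strict {P : Type} [PartialOrder P] (p : P) :
    Forces p (.ex (SetFml.fInjFromTo 0 1 2))
      ![VSet.hatV ZFSet.omega p, VSet.hatV (ZFSet.powerset ZFSet.omega) p] ∧
    Forces p (.ex (SetFml.fInjFromTo 0 1 2))
      ![VSet.hatV (ZFSet.powerset ZFSet.omega) p,
        VSet.hatV (ZFSet.powerset (ZFSet.powerset ZFSet.omega)) p] ∧
    Forces p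
      (.not (.ex (.and (SetFml.fSub 0 1)
        (.and (SetFml.fIsFunction 0) (SetFml.fOnto 0 2)))))
      ![VSet.hatV (ZFSet.omega.prod (ZFSet.powerset ZFSet.omega)) p,
        VSet.hatV (ZFSet.powerset ZFSet.omega) p] ∧
    Forces p
      (.not (.ex (.and (SetFml.fSub 0 1)
        (.and (SetFml.fIsFunction 0) (SetFml.fOnto 0 2)))))
      ![VSet.hatV ((ZFSet.powerset ZFSet.omega).prod
          (ZFSet.powerset (ZFSet.powerset ZFSet.omega))) p,
        VSet.hatV (ZFSet.powerset (ZFSet.powerset ZFSet.omega)) p] := by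
  exact ⟨VX.forces_inj p ZFSet.omega, VX.forces_inj p (ZFSet.powerset ZFSet.omega),
    VX.forces_not_surj p ZFSet.omega, VX.forces_not_surj p (ZFSet.powerset ZFSet.omega)⟩

end
end
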